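/- arXiv:math/0409274 — 9 statements merged into one kernel-verified Lean document; each statement's English description precedes it below -/
import Mathlib

section
/- The series H(s,t) = Σ_{n≥0} Σ_{σ ∈ NCP_n} ∫_{t ≤ t_1 ≤ ⋯ ≤ t_{2n} ≤ s} Π_{i ∈ cr(σ)} k(t_i, t_{σ(i)}) dt_1⋯dt_{2n} satisfies H(s,t) ≤ exp(2 ∫_t^s k(u,u)^{1/2} du), for any continuous nonnegative kernel k with k(t,s)² ≤ k(t,t)k(s,s). -/
open MeasureTheory Finset
open scoped Classical

/-- `σ` is a non-crossing pairing: an involution without fixed points such that the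
crossing situation `i < j < σ i < σ j` never occurs. -/
def IsNCPairing {m : ℕ} (σ : Equiv.Perm (Fin m)) : Prop :=
  (∀ i, σ (σ i) = i) ∧ (∀ i, σ i ≠ i) ∧ ∀ i j : Fin m, i < j → j < σ i → ¬ σ i < σ j

/-- The `n`-th term of the pairing series:
`Σ_{σ ∈ NCP_n} ∫_{t ≤ t_1 ≤ ⋯ ≤ t_{2n} ≤ s} Π_{i ∈ cr(σ)} k(t_i, t_{σ(i)}) dt`. -/
noncomputable def pairingTerm (k : ℝ → ℝ → ℝ) (n : ℕ) (t s : ℝ) : ℝ :=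
  ∑ σ ∈ Finset.univ.filter (fun σ : Equiv.Perm (Fin (2 * n)) => IsNCPairing σ),
    ∫ x in {x : Fin (2 * n) → ℝ | Monotone x ∧ ∀ i, x i ∈ Set.Icc t s},
      ∏ i ∈ Finset.univ.filter (fun i => i < σ i), k (x i) (x (σ i))

/-- The non-crossing pairing series `H(s,t)`. -/
noncomputable def kraichnanSeries (k : ℝ → ℝ → ℝ) (s t : ℝ) : ℝ :=
  ∑' n : ℕ, pairingTerm k n t s

lemma ncp_agree {m : ℕ} (d : ℕ) : ∀ (σ τ : Equiv.Perm (Fin m)),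
    IsNCPairing σ → IsNCPairing τ → (∀ i, i < σ i ↔ i < τ i) →
    ∀ i : Fin m, i < σ i → ((σ i : ℕ) - (i : ℕ) ≤ d) → τ i = σ i := by
  induction d using Nat.strong_induction_on with
  | _ d IH =>
  intro σ τ hσ hτ h i hi hd
  obtain ⟨hσinv, hσne, hσnc⟩ := hσ
  obtain ⟨hτinv, hτne, hτnc⟩ := hτ
  have hd1 : 1 ≤ d := by
    have : (i : ℕ) < (σ i : ℕ) := hi
    omega
  -- interval invariance for σ
  have hint : ∀ p : Fin m, i < p → p < σ i → i < σ p ∧ σ p < σ i := by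
    intro p hip hpj
    rcases (hσne p).lt_or_gt with hgt | hlt
    · -- σ p < p : closer
      have hne_i : σ p ≠ i := by
        intro hcon
        have : σ (σ p) = σ i := by rw [hcon]
        rw [hσinv] at this
        exact absurd this (ne_of_lt hpj)
      have hgi : i < σ p := by
        rcases lt_or_gt_of_ne hne_i with hlt2 | hgt2
        · exfalso
          have hcross := hσnc (σ p) i hlt2 (by rw [hσinv]; exact hip)
          rw [hσinv] at hcross
          exact hcross hpj
        · exact hgt2
      exact ⟨hgi, lt_trans hgt hpj⟩
    · -- p < σ p : opener
      have hle : ¬ σ i < σ p := hσnc i p hip hpj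
      have hne_j : σ p ≠ σ i := fun hcon => (ne_of_lt hip).symm (σ.injective hcon) |>.elim
      exact ⟨lt_trans hip hlt, lt_of_le_of_ne (not_lt.mp hle) hne_j⟩
  -- τ agrees with σ strictly inside the interval (i, σ i)
  have hagree : ∀ p : Fin m, i < p → p < σ i → τ p = σ p := by
    intro p hip hpj
    rcases (hσne p).lt_or_gt with hgt | hlt
    · -- closer : q := σ p is opener with smaller gap
      obtain ⟨h1, h2⟩ := hint p hip hpj
      have hqop : σ p < σ (σ p) := by rw [hσinv]; exact hgt
      have gap : ((σ (σ p) : ℕ)) - ((σ p : ℕ)) ≤ d - 1 := by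
        rw [hσinv]
        have e1 : (i : ℕ) < (σ p : ℕ) := h1
        have e2 : (σ p : ℕ) < (p : ℕ) := hgt
        have e3 : (p : ℕ) < (σ i : ℕ) := hpj
        have e4 : (i : ℕ) < (σ i : ℕ) := hi
        omega
      have hq := IH (d - 1) (by omega) σ τ ⟨hσinv, hσne, hσnc⟩ ⟨hτinv, hτne, hτnc⟩ h (σ p) hqop gap
      rw [hσinv] at hq
      -- hq : τ (σ p) = p
      have : τ (τ (σ p)) = τ p := by rw [hq]
      rw [hτinv] at this
      exact this.symm
    · -- opener with smaller gap
      obtain ⟨h1, h2⟩ := hint p hip hpj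
      have gap : ((σ p : ℕ)) - ((p : ℕ)) ≤ d - 1 := by
        have e1 : (i : ℕ) < (p : ℕ) := hip
        have e2 : (p : ℕ) < (σ p : ℕ) := hlt
        have e3 : (σ p : ℕ) < (σ i : ℕ) := h2
        have e4 : (i : ℕ) < (σ i : ℕ) := hi
        omega
      exact IH (d - 1) (by omega) σ τ ⟨hσinv, hσne, hσnc⟩ ⟨hτinv, hτne, hτnc⟩ h p hlt gap
  -- now show τ i = σ i
  have hτi : i < τ i := (h i).mp hi
  by_contra hne
  rcases lt_or_gt_of_ne hne with hlt | hgt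
  · -- τ i < σ i : τ i is in the open interval
    have hAg := hagree (τ i) hτi hlt
    -- τ (τ i) = i
    have : σ (τ i) = σ (σ i) := by rw [← hAg, hτinv, hσinv]
    have := σ.injective this
    rw [this] at hlt
    exact lt_irrefl _ hlt
  · -- σ i < τ i
    -- j := σ i is a closer for τ; c := τ (σ i) < i ; crossing in τ
    have hjc : τ (σ i) < σ i := by
      have h1 : ¬ σ i < σ (σ i) := by rw [hσinv]; exact not_lt.mpr (le_of_lt hi)
      have h2 : ¬ σ i < τ (σ i) := fun hc => h1 ((h (σ i)).mpr hc)
      exact lt_of_le_of_ne (not_lt.mp h2) (hτne (σ i))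
    have hc_ne_i : τ (σ i) ≠ i := by
      intro hcon
      have : τ (τ (σ i)) = τ i := by rw [hcon]
      rw [hτinv] at this
      exact (ne_of_lt hgt) this
    have hci : τ (σ i) < i := by
      rcases lt_or_gt_of_ne hc_ne_i with hlt2 | hgt2
      · exact hlt2
      · exfalso
        have hAg := hagree (τ (σ i)) hgt2 hjc
        have h5 : τ (τ (σ i)) = σ (τ (σ i)) := hAg ▸ rfl
        rw [hτinv] at h5
        -- h5 : σ i = σ (τ (σ i))
        have := σ.injective h5
        exact hc_ne_i (this ▸ rfl) |>.elim
    have hcross := hτnc (τ (σ i)) i hci (by rw [hτinv]; exact hi)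
    rw [hτinv] at hcross
    exact hcross hgt

lemma ncp_eq_of_openers {m : ℕ} (σ τ : Equiv.Perm (Fin m))
    (hσ : IsNCPairing σ) (hτ : IsNCPairing τ)
    (h : ∀ i, i < σ i ↔ i < τ i) : σ = τ := by
  apply Equiv.ext
  intro i
  rcases (hσ.2.1 i).lt_or_gt with hgt | hlt
  · have hop : σ i < σ (σ i) := by rw [hσ.1]; exact hgt
    have hAg := ncp_agree ((σ (σ i) : ℕ) - ((σ i : ℕ))) σ τ hσ hτ h (σ i) hop le_rfl
    rw [hσ.1] at hAg
    have h2 : τ (τ (σ i)) = τ i := by rw [hAg]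
    rw [hτ.1] at h2
    exact h2
  · exact (ncp_agree _ σ τ hσ hτ h i hlt le_rfl).symm

lemma card_ncp_le (N : ℕ) :
    (Finset.univ.filter (fun σ : Equiv.Perm (Fin N) => IsNCPairing σ)).card ≤ 2 ^ N := by
  have h := Finset.card_le_card_of_injOn
    (s := Finset.univ.filter (fun σ : Equiv.Perm (Fin N) => IsNCPairing σ))
    (t := (Finset.univ : Finset (Finset (Fin N))))
    (fun σ : Equiv.Perm (Fin N) => Finset.univ.filter (fun i => i < σ i))
    (fun a _ => Finset.mem_univ _) ?_
  · calc (Finset.univ.filter (fun σ : Equiv.Perm (Fin N) => IsNCPairing σ)).card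
        ≤ (Finset.univ : Finset (Finset (Fin N))).card := h
      _ = 2 ^ N := by simp [Finset.card_univ, Fintype.card_finset]
  · intro σ hσ τ hτ hEq
    rw [Finset.mem_coe, Finset.mem_filter] at hσ hτ
    refine ncp_eq_of_openers σ τ hσ.2 hτ.2 (fun i => ?_)
    have := Finset.ext_iff.mp hEq i
    simpa using this

def simplexSet (m : ℕ) (t u : ℝ) : Set (Fin m → ℝ) :=
  {x | Monotone x ∧ ∀ i, x i ∈ Set.Icc t u}

lemma isClosed_monotone_fin (m : ℕ) : IsClosed {x : Fin m → ℝ | Monotone x} := by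
  have h : {x : Fin m → ℝ | Monotone x}
      = ⋂ (i : Fin m) (j : Fin m) (_ : i ≤ j), {x : Fin m → ℝ | x i ≤ x j} := by
    ext x
    simp only [Set.mem_iInter, Set.mem_setOf_eq]
    exact ⟨fun h i j hij => h hij, fun h a b hab => h a b hab⟩
  rw [h]
  exact isClosed_iInter fun i => isClosed_iInter fun j => isClosed_iInter fun _ =>
    isClosed_le (continuous_apply i) (continuous_apply j)

lemma isClosed_simplexSet (m : ℕ) (t u : ℝ) : IsClosed (simplexSet m t u) := by
  have h : simplexSet m t u
      = {x : Fin m → ℝ | Monotone x} ∩ ⋂ i, (fun x : Fin m → ℝ => x i) ⁻¹' Set.Icc t u := by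
    ext x
    simp only [simplexSet, Set.mem_inter_iff, Set.mem_iInter, Set.mem_setOf_eq, Set.mem_preimage]
  rw [h]
  exact (isClosed_monotone_fin m).inter (isClosed_iInter fun i =>
    isClosed_Icc.preimage (continuous_apply i))

lemma isCompact_simplexSet (m : ℕ) (t u : ℝ) : IsCompact (simplexSet m t u) := by
  refine IsCompact.of_isClosed_subset (isCompact_Icc (a := fun _ : Fin m => t)
    (b := fun _ : Fin m => u)) (isClosed_simplexSet m t u) ?_
  intro x hx
  exact ⟨fun i => (hx.2 i).1, fun i => (hx.2 i).2⟩

lemma measurableSet_simplexSet (m : ℕ) (t u : ℝ) : MeasurableSet (simplexSet m t u) :=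
  (isClosed_simplexSet m t u).measurableSet

lemma mem_simplex_succ (m : ℕ) (t u : ℝ) (x : Fin (m + 1) → ℝ) :
    x ∈ simplexSet (m + 1) t u ↔
      x (Fin.last m) ∈ Set.Icc t u ∧
        (fun j => x (Fin.castSucc j)) ∈ simplexSet m t (x (Fin.last m)) := by
  constructor
  · rintro ⟨hmono, hicc⟩
    exact ⟨hicc _, fun a b hab => hmono (Fin.castSucc_le_castSucc_iff.mpr hab),
      fun j => ⟨(hicc _).1, hmono (Fin.le_last _)⟩⟩
  · rintro ⟨hy, hmono, hicc⟩
    constructor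
    · intro a b hab
      rcases Fin.eq_castSucc_or_eq_last b with ⟨b', rfl⟩ | rfl
      · rcases Fin.eq_castSucc_or_eq_last a with ⟨a', rfl⟩ | rfl
        · exact hmono (Fin.castSucc_le_castSucc_iff.mp hab)
        · have hba : Fin.last m = Fin.castSucc b' := le_antisymm hab (Fin.le_last _)
          rw [← hba]
      · rcases Fin.eq_castSucc_or_eq_last a with ⟨a', rfl⟩ | rfl
        · exact (hicc a').2
        · exact le_refl _
    · intro i
      rcases Fin.eq_castSucc_or_eq_last i with ⟨i', rfl⟩ | rfl
      · exact ⟨(hicc i').1, le_trans (hicc i').2 hy.2⟩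
      · exact hy

lemma simplex_integral_le (g : ℝ → ℝ) (hg : Continuous g) (hg0 : ∀ x, 0 ≤ g x) (t : ℝ) :
    ∀ (m : ℕ) (u : ℝ), t ≤ u →
      ∫ x in simplexSet m t u, ∏ i, g (x i) ≤ (∫ y in t..u, g y) ^ m / m.factorial := by
  intro m
  induction m with
  | zero =>
    intro u htu
    have h1 : simplexSet 0 t u = Set.univ := by
      ext x
      simp only [simplexSet, Set.mem_setOf_eq, Set.mem_univ, iff_true]
      exact ⟨Subsingleton.monotone x, fun i => i.elim0⟩
    rw [h1]
    have h2 : ∀ x : Fin 0 → ℝ, (∏ i, g (x i)) = 1 := fun x => by simp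
    simp only [h2]
    rw [Measure.restrict_univ, integral_const]
    have h3 : (volume : Measure (Fin 0 → ℝ)) Set.univ = 1 := by
      rw [volume_pi, Measure.pi_univ]
      simp
    rw [Measure.real, h3]
    simp
  | succ m IH =>
    intro u htu
    -- notation
    set G : ℝ → ℝ := fun v => ∫ y in t..v, g y with hG
    have hGcont : Continuous G := intervalIntegral.continuous_primitive
      (fun a b => hg.intervalIntegrable a b) t
    have hGderiv : ∀ v : ℝ, HasDerivAt G (g v) v :=
      fun v => (hg.integral_hasStrictDerivAt t v).hasDerivAt
    -- the product-space function
    set B : Set (ℝ × (Fin m → ℝ)) :=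
      {p | p.1 ∈ Set.Icc t u ∧ p.2 ∈ simplexSet m t p.1} with hB
    set H : ℝ × (Fin m → ℝ) → ℝ := fun p => g p.1 * ∏ i, g (p.2 i) with hH
    have hBclosed : IsClosed B := by
      have hBeq : B = ((fun p : ℝ × (Fin m → ℝ) => p.1) ⁻¹' Set.Icc t u)
          ∩ ((fun p : ℝ × (Fin m → ℝ) => p.2) ⁻¹' {x | Monotone x})
          ∩ ⋂ i, ({p : ℝ × (Fin m → ℝ) | t ≤ p.2 i} ∩ {p | p.2 i ≤ p.1}) := by
        ext p
        simp only [hB, simplexSet, Set.mem_inter_iff, Set.mem_iInter, Set.mem_setOf_eq,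
          Set.mem_preimage, Set.mem_Icc]
        tauto
      rw [hBeq]
      refine (((isClosed_Icc.preimage continuous_fst).inter
        ((isClosed_monotone_fin m).preimage continuous_snd)).inter
        (isClosed_iInter fun i => IsClosed.inter ?_ ?_))
      · exact isClosed_le continuous_const ((continuous_apply i).comp continuous_snd)
      · exact isClosed_le ((continuous_apply i).comp continuous_snd) continuous_fst
    have hBcompact : IsCompact B := by
      refine IsCompact.of_isClosed_subset ((isCompact_Icc (a := t) (b := u)).prod
        (isCompact_Icc (a := fun _ : Fin m => t) (b := fun _ : Fin m => u))) hBclosed ?_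
      rintro ⟨y, x⟩ ⟨h1, h2⟩
      exact ⟨h1, fun i => (h2.2 i).1, fun i => le_trans (h2.2 i).2 h1.2⟩
    have hHcont : Continuous H := by
      apply Continuous.mul (hg.comp continuous_fst)
      exact continuous_finset_prod _ fun i _ => hg.comp ((continuous_apply i).comp continuous_snd)
    set F : ℝ × (Fin m → ℝ) → ℝ := B.indicator H with hF
    have hFint : Integrable F (volume : Measure (ℝ × (Fin m → ℝ))) :=
      (hHcont.continuousOn.integrableOn_compact hBcompact).integrable_indicator
        hBclosed.measurableSet
    -- step 1: rewrite LHS as a product integral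
    have e := MeasurableEquiv.piFinSuccAbove (fun _ : Fin (m + 1) => ℝ) (Fin.last m)
    have hem : ∀ x : Fin (m + 1) → ℝ,
        (MeasurableEquiv.piFinSuccAbove (fun _ : Fin (m + 1) => ℝ) (Fin.last m)) x
          = (x (Fin.last m), fun j => x (Fin.castSucc j)) := by
      intro x
      rw [MeasurableEquiv.piFinSuccAbove_apply, Fin.insertNthEquiv_symm_apply]
      refine Prod.ext rfl ?_
      funext j
      show x ((Fin.last m).succAbove j) = x j.castSucc
      rw [Fin.succAbove_last]
    have step1 : ∫ x in simplexSet (m + 1) t u, ∏ i, g (x i)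
        = ∫ p : ℝ × (Fin m → ℝ), F p := by
      rw [← integral_indicator (measurableSet_simplexSet (m + 1) t u)]
      have key : ∀ x : Fin (m + 1) → ℝ,
          (simplexSet (m + 1) t u).indicator (fun x => ∏ i, g (x i)) x
          = F ((MeasurableEquiv.piFinSuccAbove (fun _ : Fin (m + 1) => ℝ) (Fin.last m)) x) := by
        intro x
        rw [hem x]
        by_cases hx : x ∈ simplexSet (m + 1) t u
        · rw [Set.indicator_of_mem hx]
          have hx' := (mem_simplex_succ m t u x).mp hx
          have hmem : ((x (Fin.last m), fun j => x (Fin.castSucc j)) : ℝ × (Fin m → ℝ)) ∈ B :=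
            ⟨hx'.1, hx'.2⟩
          rw [hF, Set.indicator_of_mem hmem, hH]
          simp only []
          rw [Fin.prod_univ_castSucc (f := fun i => g (x i))]
          ring
        · rw [Set.indicator_of_notMem hx]
          have hmem : ((x (Fin.last m), fun j => x (Fin.castSucc j)) : ℝ × (Fin m → ℝ)) ∉ B := by
            intro hc
            exact hx ((mem_simplex_succ m t u x).mpr ⟨hc.1, hc.2⟩)
          rw [hF, Set.indicator_of_notMem hmem]
      simp only [key]
      have hmp := MeasureTheory.measurePreserving_piFinSuccAbove
        (fun _ : Fin (m + 1) => (volume : Measure ℝ)) (Fin.last m)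
      have := hmp.integral_comp
        (MeasurableEquiv.piFinSuccAbove (fun _ : Fin (m + 1) => ℝ) (Fin.last m)).measurableEmbedding F
      rw [volume_pi]
      rw [this]
      rw [Measure.volume_eq_prod, volume_pi]
    -- step 2: Fubini
    have step2 : ∫ p : ℝ × (Fin m → ℝ), F p
        = ∫ y : ℝ, ∫ x : Fin m → ℝ, F (y, x) := by
      rw [Measure.volume_eq_prod]
      rw [Measure.volume_eq_prod] at hFint
      exact MeasureTheory.integral_prod F hFint
    -- step 3: compute inner integral
    have inner_eq : ∀ y : ℝ, (∫ x : Fin m → ℝ, F (y, x))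
        = (Set.Icc t u).indicator
            (fun y => g y * ∫ x in simplexSet m t y, ∏ i, g (x i)) y := by
      intro y
      by_cases hy : y ∈ Set.Icc t u
      · rw [Set.indicator_of_mem hy]
        have hFy : ∀ x : Fin m → ℝ, F (y, x)
            = (simplexSet m t y).indicator (fun x => g y * ∏ i, g (x i)) x := by
          intro x
          by_cases hx : x ∈ simplexSet m t y
          · have hmem : ((y, x) : ℝ × (Fin m → ℝ)) ∈ B := ⟨hy, hx⟩
            rw [hF, Set.indicator_of_mem hmem, Set.indicator_of_mem hx]
          · have hmem : ((y, x) : ℝ × (Fin m → ℝ)) ∉ B := fun hc => hx hc.2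
            rw [hF, Set.indicator_of_notMem hmem, Set.indicator_of_notMem hx]
        simp only [hFy]
        rw [integral_indicator (measurableSet_simplexSet m t y)]
        exact integral_const_mul (g y) _
      · rw [Set.indicator_of_notMem hy]
        have hFy : ∀ x : Fin m → ℝ, F (y, x) = 0 := by
          intro x
          rw [hF, Set.indicator_of_notMem]
          intro hc
          exact hy hc.1
        simp only [hFy, integral_zero]
    -- integrability of the sliced function
    have hslice : Integrable (fun y : ℝ => ∫ x : Fin m → ℝ, F (y, x)) volume := by
      rw [Measure.volume_eq_prod] at hFint
      exact hFint.integral_prod_left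
    -- step 4: bound by the primitive
    have step4 : ∫ y : ℝ, (∫ x : Fin m → ℝ, F (y, x))
        ≤ ∫ y in Set.Icc t u, g y * (G y ^ m / m.factorial) := by
      have hrw : ∫ y : ℝ, (∫ x : Fin m → ℝ, F (y, x))
          = ∫ y in Set.Icc t u,
              g y * ∫ x in simplexSet m t y, ∏ i, g (x i) := by
        simp only [inner_eq]
        exact integral_indicator measurableSet_Icc
      rw [hrw]
      refine setIntegral_mono_on ?_ ?_ measurableSet_Icc ?_
      · have : IntegrableOn (fun y => g y * ∫ x in simplexSet m t y, ∏ i, g (x i))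
            (Set.Icc t u) volume := by
          rw [← integrable_indicator_iff measurableSet_Icc]
          have : (Set.Icc t u).indicator
              (fun y => g y * ∫ x in simplexSet m t y, ∏ i, g (x i))
              = fun y : ℝ => ∫ x : Fin m → ℝ, F (y, x) := by
            funext y
            rw [inner_eq y]
          rw [this]
          exact hslice
        exact this
      · exact (hg.mul ((hGcont.pow m).div_const _)).integrableOn_Icc
      · intro y hy
        have h1 : 0 ≤ g y := hg0 y
        have h2 := IH y hy.1
        exact mul_le_mul_of_nonneg_left h2 h1
    -- step 5: FTC
    have step5 : ∫ y in Set.Icc t u, g y * (G y ^ m / m.factorial)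
        = G u ^ (m + 1) / (m + 1).factorial := by
      rw [integral_Icc_eq_integral_Ioc, ← intervalIntegral.integral_of_le htu]
      have hderiv : ∀ y ∈ Set.uIcc t u,
          HasDerivAt (fun v => G v ^ (m + 1) / (m + 1).factorial)
            (g y * (G y ^ m / m.factorial)) y := by
        intro y _
        have h1 : HasDerivAt (fun v => G v ^ (m + 1))
            ((m + 1 : ℕ) * G y ^ m * g y) y := by
          have := (hGderiv y).fun_pow (m + 1)
          simpa using this
        have h2 := h1.div_const ((m + 1).factorial : ℝ)
        refine h2.congr_deriv ?_
        have hfac : ((m + 1).factorial : ℝ) = (m + 1) * m.factorial := by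
          rw [Nat.factorial_succ]
          push_cast
          ring
        rw [hfac]
        have hm : (m.factorial : ℝ) ≠ 0 := Nat.cast_ne_zero.mpr (Nat.factorial_ne_zero m)
        field_simp
        push_cast
        ring
      rw [intervalIntegral.integral_eq_sub_of_hasDerivAt hderiv
        ((hg.mul ((hGcont.pow m).div_const _)).intervalIntegrable t u)]
      have hGt : G t = 0 := by simp [hG]
      rw [hGt]
      simp [zero_pow]
    calc ∫ x in simplexSet (m + 1) t u, ∏ i, g (x i)
        = ∫ y : ℝ, (∫ x : Fin m → ℝ, F (y, x)) := by rw [step1, step2]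
      _ ≤ ∫ y in Set.Icc t u, g y * (G y ^ m / m.factorial) := step4
      _ = G u ^ (m + 1) / (m + 1).factorial := step5

/-- The pairing series satisfies `H(s,t) ≤ exp(2 ∫_t^s k(u,u)^{1/2} du)` for any continuous
nonnegative symmetric kernel satisfying the Cauchy–Schwarz bound. -/
theorem kraichnanSeries_le (k : ℝ → ℝ → ℝ)
    (hk : Continuous fun p : ℝ × ℝ => k p.1 p.2)
    (hnn : ∀ x y, 0 ≤ k x y) (hsym : ∀ x y, k x y = k y x)
    (hcs : ∀ x y, (k x y) ^ 2 ≤ k x x * k y y)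
    (t s : ℝ) (ht : 0 ≤ t) (hts : t ≤ s) :
    kraichnanSeries k s t ≤ Real.exp (2 * ∫ u in t..s, Real.sqrt (k u u)) := by
  set g : ℝ → ℝ := fun u => Real.sqrt (k u u) with hgdef
  have hdiag : Continuous fun u : ℝ => k u u :=
    hk.comp (continuous_id.prodMk continuous_id)
  have hgcont : Continuous g := Real.continuous_sqrt.comp hdiag
  have hg0 : ∀ x, 0 ≤ g x := fun x => Real.sqrt_nonneg _
  set K : ℝ := ∫ u in t..s, g u with hKdef
  have hK0 : 0 ≤ K := intervalIntegral.integral_nonneg hts (fun u _ => hg0 u)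
  have hks : ∀ a b : ℝ, k a b ≤ g a * g b := by
    intro a b
    have h1 : k a b = Real.sqrt ((k a b) ^ 2) := (Real.sqrt_sq (hnn a b)).symm
    rw [h1]
    calc Real.sqrt ((k a b) ^ 2) ≤ Real.sqrt (k a a * k b b) := Real.sqrt_le_sqrt (hcs a b)
      _ = g a * g b := Real.sqrt_mul (hnn a a) _
  -- termwise bound
  have hterm : ∀ n : ℕ, pairingTerm k n t s ≤ (2 * K) ^ (2 * n) / ((2 * n).factorial : ℝ) := by
    intro n
    have hone : ∀ σ ∈ Finset.univ.filter (fun σ : Equiv.Perm (Fin (2 * n)) => IsNCPairing σ),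
        (∫ x in simplexSet (2 * n) t s,
          ∏ i ∈ Finset.univ.filter (fun i => i < σ i), k (x i) (x (σ i)))
          ≤ K ^ (2 * n) / ((2 * n).factorial : ℝ) := by
      intro σ hσmem
      rw [Finset.mem_filter] at hσmem
      obtain ⟨-, hNC⟩ := hσmem
      have hpt : ∀ x : Fin (2 * n) → ℝ,
          (∏ i ∈ Finset.univ.filter (fun i => i < σ i), k (x i) (x (σ i)))
            ≤ ∏ i, g (x i) := by
        intro x
        have step1 : (∏ i ∈ Finset.univ.filter (fun i => i < σ i), k (x i) (x (σ i)))
            ≤ ∏ i ∈ Finset.univ.filter (fun i => i < σ i), (g (x i) * g (x (σ i))) :=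
          Finset.prod_le_prod (fun i _ => hnn _ _) (fun i _ => hks _ _)
        have step2 : (∏ i ∈ Finset.univ.filter (fun i => i < σ i), (g (x i) * g (x (σ i))))
            = (∏ i ∈ Finset.univ.filter (fun i => i < σ i), g (x i))
              * ∏ i ∈ Finset.univ.filter (fun i => i < σ i), g (x (σ i)) :=
          Finset.prod_mul_distrib
        have step3 : (∏ i ∈ Finset.univ.filter (fun i => i < σ i), g (x (σ i)))
            = ∏ j ∈ Finset.univ.filter (fun j => ¬ j < σ j), g (x j) := by
          refine Finset.prod_nbij (fun i => σ i) ?_ ?_ ?_ (fun a _ => rfl)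
          · intro a ha
            rw [Finset.mem_filter] at ha ⊢
            refine ⟨Finset.mem_univ _, ?_⟩
            rw [hNC.1 a]
            exact not_lt.mpr (le_of_lt ha.2)
          · exact Set.injOn_of_injective σ.injective
          · intro j hj
            simp only [Finset.coe_filter, Set.mem_setOf_eq, Finset.mem_univ, true_and] at hj
            refine ⟨σ j, ?_, hNC.1 j⟩
            simp only [Finset.coe_filter, Set.mem_setOf_eq, Finset.mem_univ, true_and]
            rw [hNC.1 j]
            exact lt_of_le_of_ne (not_lt.mp hj) (hNC.2.1 j)
        calc (∏ i ∈ Finset.univ.filter (fun i => i < σ i), k (x i) (x (σ i)))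
            ≤ (∏ i ∈ Finset.univ.filter (fun i => i < σ i), g (x i))
              * ∏ j ∈ Finset.univ.filter (fun j => ¬ j < σ j), g (x j) := by
              rw [← step3, ← step2]; exact step1
          _ = ∏ i, g (x i) := Finset.prod_filter_mul_prod_filter_not _ _ _
      have hint1 : IntegrableOn
          (fun x : Fin (2 * n) → ℝ =>
            ∏ i ∈ Finset.univ.filter (fun i => i < σ i), k (x i) (x (σ i)))
          (simplexSet (2 * n) t s) volume := by
        refine ContinuousOn.integrableOn_compact (isCompact_simplexSet _ _ _) ?_
        exact (continuous_finset_prod _ fun i _ =>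
          hk.comp ((continuous_apply i).prodMk (continuous_apply (σ i)))).continuousOn
      have hint2 : IntegrableOn (fun x : Fin (2 * n) → ℝ => ∏ i, g (x i))
          (simplexSet (2 * n) t s) volume := by
        refine ContinuousOn.integrableOn_compact (isCompact_simplexSet _ _ _) ?_
        exact (continuous_finset_prod _ fun i _ =>
          hgcont.comp (continuous_apply i)).continuousOn
      calc (∫ x in simplexSet (2 * n) t s,
            ∏ i ∈ Finset.univ.filter (fun i => i < σ i), k (x i) (x (σ i)))
          ≤ ∫ x in simplexSet (2 * n) t s, ∏ i, g (x i) :=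
            setIntegral_mono_on hint1 hint2 (measurableSet_simplexSet _ _ _)
              (fun x _ => hpt x)
        _ ≤ K ^ (2 * n) / ((2 * n).factorial : ℝ) :=
            simplex_integral_le g hgcont hg0 t (2 * n) s hts
    have hsum1 : pairingTerm k n t s
        ≤ ((Finset.univ.filter (fun σ : Equiv.Perm (Fin (2 * n)) => IsNCPairing σ)).card : ℝ)
          * (K ^ (2 * n) / ((2 * n).factorial : ℝ)) := by
      rw [pairingTerm]
      calc (∑ σ ∈ Finset.univ.filter (fun σ : Equiv.Perm (Fin (2 * n)) => IsNCPairing σ),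
            ∫ x in {x : Fin (2 * n) → ℝ | Monotone x ∧ ∀ i, x i ∈ Set.Icc t s},
              ∏ i ∈ Finset.univ.filter (fun i => i < σ i), k (x i) (x (σ i)))
          ≤ ∑ σ ∈ Finset.univ.filter (fun σ : Equiv.Perm (Fin (2 * n)) => IsNCPairing σ),
              (K ^ (2 * n) / ((2 * n).factorial : ℝ)) := Finset.sum_le_sum hone
        _ = _ := by rw [Finset.sum_const, nsmul_eq_mul]
    have hcard := card_ncp_le (2 * n)
    calc pairingTerm k n t s
        ≤ ((Finset.univ.filter (fun σ : Equiv.Perm (Fin (2 * n)) => IsNCPairing σ)).card : ℝ)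
          * (K ^ (2 * n) / ((2 * n).factorial : ℝ)) := hsum1
      _ ≤ (2 ^ (2 * n) : ℝ) * (K ^ (2 * n) / ((2 * n).factorial : ℝ)) := by
          refine mul_le_mul_of_nonneg_right ?_ ?_
          · exact_mod_cast hcard
          · positivity
      _ = (2 * K) ^ (2 * n) / ((2 * n).factorial : ℝ) := by
          rw [mul_pow]
          ring
  have hpos : ∀ n : ℕ, 0 ≤ pairingTerm k n t s := by
    intro n
    rw [pairingTerm]
    refine Finset.sum_nonneg fun σ _ => ?_
    refine setIntegral_nonneg (measurableSet_simplexSet (2 * n) t s) fun x _ => ?_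
    exact Finset.prod_nonneg fun i _ => hnn _ _
  have hb : Summable (fun n : ℕ => (2 * K) ^ (2 * n) / ((2 * n).factorial : ℝ)) :=
    (Real.summable_pow_div_factorial (2 * K)).comp_injective (fun a b hab => by omega)
  have hsummable : Summable (fun n : ℕ => pairingTerm k n t s) :=
    Summable.of_nonneg_of_le hpos hterm hb
  have h2K : 0 ≤ 2 * K := by linarith
  calc kraichnanSeries k s t
      = ∑' n : ℕ, pairingTerm k n t s := rfl
    _ ≤ ∑' n : ℕ, (2 * K) ^ (2 * n) / ((2 * n).factorial : ℝ) :=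
        Summable.tsum_le_tsum hterm hsummable hb
    _ ≤ ∑' n : ℕ, (2 * K) ^ n / (n.factorial : ℝ) := by
        refine Summable.tsum_le_tsum_of_inj (fun n => 2 * n) (fun a b hab => by dsimp at hab; omega)
          (fun c _ => by positivity) (fun n => le_refl _) hb
          (Real.summable_pow_div_factorial (2 * K))
    _ = Real.exp (2 * K) := by
        rw [Real.exp_eq_exp_ℝ, NormedSpace.exp_eq_tsum_div]
end

section
/- If the kernel k is uniformly bounded by C on ℝ≥0 × ℝ≥0, then any solution H of the Kraichnan equation ∂_s H(s,t) = ∫_t^s H(s,u) H(u,t) k(s,u) du with H(t,t)=1, given by the non-crossing pairing series, satisfies H(s,t) ≤ exp(2√C (s−t)) for all s ≥ t. -/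
open MeasureTheory Finset
open scoped Classical
open scoped ENNReal

lemma ncp_mem_interval {m : ℕ} {σ : Equiv.Perm (Fin m)} (h : IsNCPairing σ)
    {i j : Fin m} (hij : i < j) (hj : j < σ i) : i < σ j ∧ σ j < σ i := by
  obtain ⟨hinv, hfix, hcr⟩ := h
  have h1 : σ j ≠ σ i := fun e => absurd (σ.injective e) (ne_of_gt hij)
  have h2 : σ j ≠ i := by
    intro e
    have : j = σ i := by rw [← hinv j, e]
    exact absurd this (ne_of_lt hj)
  rcases lt_trichotomy (σ j) i with hc | hc | hc
  · have := hcr (σ j) i hc (by rw [hinv]; exact hij)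
    rw [hinv] at this
    exact absurd hj this
  · exact absurd hc h2
  rcases lt_trichotomy (σ j) (σ i) with hd | hd | hd
  · exact ⟨hc, hd⟩
  · exact absurd hd h1
  · exact absurd hd (hcr i j hij hj)

lemma ncp_eq_of_opener_eq {m : ℕ} {σ τ : Equiv.Perm (Fin m)} (hσ : IsNCPairing σ)
    (hτ : IsNCPairing τ) (hS : ∀ i : Fin m, i < σ i ↔ i < τ i) : σ = τ := by
  by_contra hne
  have hop : ∀ (π : Equiv.Perm (Fin m)), IsNCPairing π → ∀ i, ¬ i < π i → π i < i :=
    fun π hπ i h => (hπ.2.1 i).lt_or_gt.resolve_right h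
  set D := Finset.univ.filter (fun i : Fin m => i < σ i ∧ σ i ≠ τ i) with hD
  have hDne : D.Nonempty := by
    have hex : ∃ x, σ x ≠ τ x := by
      by_contra h; push_neg at h; exact hne (Equiv.ext h)
    obtain ⟨x, hx⟩ := hex
    by_cases hxo : x < σ x
    · exact ⟨x, Finset.mem_filter.2 ⟨Finset.mem_univ _, hxo, hx⟩⟩
    · refine ⟨σ x, Finset.mem_filter.2 ⟨Finset.mem_univ _, ?_, ?_⟩⟩
      · rw [hσ.1 x]; exact hop σ hσ x hxo
      · rw [hσ.1 x]
        intro e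
        apply hx
        have h2 : τ x = σ x := by
          conv_lhs => rw [e]
          rw [hτ.1]
        exact h2.symm
  obtain ⟨i, hiD, hmin⟩ := D.exists_min_image (fun i => (σ i).val - i.val) hDne
  rw [Finset.mem_filter] at hiD
  obtain ⟨-, hiσ, hine⟩ := hiD
  have key : ∀ j : Fin m, i < j → j < σ j → σ j < σ i → σ j = τ j := by
    intro j h1 h2 h3
    by_contra hne'
    have hjD : j ∈ D := Finset.mem_filter.2 ⟨Finset.mem_univ _, h2, hne'⟩
    have hm := hmin j hjD
    have hv1 : i.val < j.val := h1
    have hv2 : j.val < (σ j).val := h2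
    have hv3 : (σ j).val < (σ i).val := h3
    omega
  have haσ : σ (σ i) = i := hσ.1 i
  have haτ : τ (τ (σ i)) = σ i := hτ.1 _
  have haclτ : τ (σ i) < σ i := by
    apply hop τ hτ
    rw [← hS]
    rw [haσ]
    exact not_lt.2 hiσ.le
  have hpne : τ (σ i) ≠ i := by
    intro e
    apply hine
    have h2 : τ (τ (σ i)) = σ i := hτ.1 _
    rw [e] at h2
    exact h2.symm
  rcases lt_or_gt_of_ne hpne with hpi | hpi
  · -- p < i : get b = τ i ∈ (i, σ i), q = σ (τ i), contradiction
    have hbint : τ (σ i) < τ i ∧ τ i < τ (τ (σ i)) :=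
      ncp_mem_interval hτ hpi (by rw [haτ]; exact hiσ)
    have hbi : i < τ i := (hS i).1 hiσ
    have hbσ : τ i < σ i := by rw [← haτ]; exact hbint.2
    have hqint : i < σ (τ i) ∧ σ (τ i) < σ i := ncp_mem_interval hσ hbi hbσ
    have hbcl : σ (τ i) < τ i := by
      apply hop σ hσ
      rw [hS, hτ.1 i]
      exact not_lt.2 hbi.le
    have h5 : σ (σ (τ i)) = τ i := hσ.1 _
    have hkey := key (σ (τ i)) hqint.1 (by rw [h5]; exact hbcl) (by rw [h5]; exact hbσ)
    rw [h5] at hkey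
    have h6 : i = σ (τ i) := τ.injective hkey
    exact absurd hqint.1 (by rw [← h6]; exact lt_irrefl i)
  · -- i < p < σ i
    have hpσ : τ (σ i) < σ (τ (σ i)) := (hS _).2 (by rw [haτ]; exact haclτ)
    have hint := ncp_mem_interval hσ hpi haclτ
    have hkey := key _ hpi hpσ hint.2
    rw [haτ] at hkey
    exact absurd (σ.injective hkey) hpi.ne'

lemma ncp_card_le (m : ℕ) :
    (Finset.univ.filter (fun σ : Equiv.Perm (Fin m) => IsNCPairing σ)).card ≤ 2 ^ m := by
  have h : (Finset.univ.filter (fun σ : Equiv.Perm (Fin m) => IsNCPairing σ)).card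
      ≤ (Finset.univ : Finset (Finset (Fin m))).card := by
    apply Finset.card_le_card_of_injOn (fun σ => Finset.univ.filter (fun i => i < σ i))
      (fun _ _ => Finset.mem_univ _)
    intro σ hσ τ hτ hst
    simp only [Finset.coe_filter, Set.mem_setOf_eq, Finset.mem_univ, true_and] at hσ hτ
    apply ncp_eq_of_opener_eq hσ hτ
    intro i
    have := Finset.ext_iff.1 hst i
    simpa using this
  calc _ ≤ (Finset.univ : Finset (Finset (Fin m))).card := h
    _ = 2 ^ m := by rw [Finset.card_univ, Fintype.card_finset, Fintype.card_fin]

lemma ncp_opener_card {n : ℕ} {σ : Equiv.Perm (Fin (2*n))} (h : IsNCPairing σ) :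
    (Finset.univ.filter (fun i => i < σ i)).card = n := by
  have hbij : (Finset.univ.filter (fun i => i < σ i)).card
      = (Finset.univ.filter (fun i => σ i < i)).card := by
    apply Finset.card_bij (fun i _ => σ i)
    · intro a ha
      simp only [Finset.mem_filter, Finset.mem_univ, true_and] at ha ⊢
      rw [h.1 a]; exact ha
    · intro a _ b _ hab; exact σ.injective hab
    · intro b hb
      simp only [Finset.mem_filter, Finset.mem_univ, true_and] at hb ⊢
      exact ⟨σ b, by rw [h.1 b]; exact hb, h.1 b⟩
  have hsplit : (Finset.univ.filter (fun i => i < σ i)).card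
      + (Finset.univ.filter (fun i => σ i < i)).card = 2 * n := by
    have hcongr : Finset.univ.filter (fun i : Fin (2*n) => σ i < i)
        = Finset.univ.filter (fun i => ¬ i < σ i) := by
      apply Finset.filter_congr
      intro i _
      constructor
      · exact fun h' => asymm h'
      · exact fun h' => lt_of_le_of_ne (not_lt.1 h') (h.2.1 i)
    rw [hcongr, Finset.card_filter_add_card_filter_not, Finset.card_univ,
      Fintype.card_fin]
  omega

lemma measurableSet_monoSimplex (m : ℕ) (t s : ℝ) :
    MeasurableSet {x : Fin m → ℝ | Monotone x ∧ ∀ i, x i ∈ Set.Icc t s} := by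
  have hsplit : {x : Fin m → ℝ | Monotone x ∧ ∀ i, x i ∈ Set.Icc t s}
      = {x : Fin m → ℝ | Monotone x} ∩ {x : Fin m → ℝ | ∀ i, x i ∈ Set.Icc t s} := rfl
  rw [hsplit]
  apply MeasurableSet.inter
  · have h : {x : Fin m → ℝ | Monotone x}
        = ⋂ (i : Fin m), ⋂ (j : Fin m), ⋂ (_ : i ≤ j), {x | x i ≤ x j} := by
      ext x
      constructor
      · intro h; simp only [Set.mem_iInter]; intro i j hij; exact h hij
      · intro h i j hij; simp only [Set.mem_iInter] at h; exact h i j hij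
    rw [h]
    exact MeasurableSet.iInter fun i => MeasurableSet.iInter fun j =>
      MeasurableSet.iInter fun _ =>
        measurableSet_le (measurable_pi_apply i) (measurable_pi_apply j)
  · have h : {x : Fin m → ℝ | ∀ i, x i ∈ Set.Icc t s}
        = ⋂ (i : Fin m), (fun x : Fin m → ℝ => x i) ⁻¹' (Set.Icc t s) := by
      ext x; simp [Set.mem_iInter]
    rw [h]
    exact MeasurableSet.iInter fun i => (measurable_pi_apply i) measurableSet_Icc

lemma measurableSet_strictSimplex (m : ℕ) (t s : ℝ) (π : Equiv.Perm (Fin m)) :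
    MeasurableSet {x : Fin m → ℝ | StrictMono (x ∘ π) ∧ ∀ i, x i ∈ Set.Icc t s} := by
  have hsplit : {x : Fin m → ℝ | StrictMono (x ∘ π) ∧ ∀ i, x i ∈ Set.Icc t s}
      = {x : Fin m → ℝ | StrictMono (x ∘ π)} ∩ {x : Fin m → ℝ | ∀ i, x i ∈ Set.Icc t s} := rfl
  rw [hsplit]
  apply MeasurableSet.inter
  · have h : {x : Fin m → ℝ | StrictMono (x ∘ π)}
        = ⋂ (i : Fin m), ⋂ (j : Fin m), ⋂ (_ : i < j), {x | x (π i) < x (π j)} := by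
      ext x
      constructor
      · intro h; simp only [Set.mem_iInter]; intro i j hij; exact h hij
      · intro h i j hij; simp only [Set.mem_iInter] at h; exact h i j hij
    rw [h]
    exact MeasurableSet.iInter fun i => MeasurableSet.iInter fun j =>
      MeasurableSet.iInter fun _ =>
        measurableSet_lt (measurable_pi_apply _) (measurable_pi_apply _)
  · have h : {x : Fin m → ℝ | ∀ i, x i ∈ Set.Icc t s}
        = ⋂ (i : Fin m), (fun x : Fin m → ℝ => x i) ⁻¹' (Set.Icc t s) := by
      ext x; simp [Set.mem_iInter]
    rw [h]
    exact MeasurableSet.iInter fun i => (measurable_pi_apply i) measurableSet_Icc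

lemma volume_monoSimplex_le (m : ℕ) (t s : ℝ) (hts : t ≤ s) :
    volume {x : Fin m → ℝ | Monotone x ∧ ∀ i, x i ∈ Set.Icc t s}
      ≤ ENNReal.ofReal ((s - t) ^ m / (Nat.factorial m : ℝ)) := by
  set T : Equiv.Perm (Fin m) → Set (Fin m → ℝ) :=
    fun π => {x | StrictMono (x ∘ π) ∧ ∀ i, x i ∈ Set.Icc t s} with hT
  -- each T π has the same volume as T 1
  have hvol : ∀ π : Equiv.Perm (Fin m), volume (T π) = volume (T 1) := by
    intro π
    have hmp := MeasureTheory.volume_preserving_arrowCongr' (β₁ := ℝ) π.symm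
      (MeasurableEquiv.refl ℝ) (MeasureTheory.MeasurePreserving.id _)
    have hpre : (⇑(MeasurableEquiv.arrowCongr' π.symm (MeasurableEquiv.refl ℝ))) ⁻¹' (T 1)
        = T π := by
      ext x
      have hx : (MeasurableEquiv.arrowCongr' π.symm (MeasurableEquiv.refl ℝ)) x = x ∘ π := rfl
      simp only [Set.mem_preimage, hx, hT, Set.mem_setOf_eq]
      have hco : (x ∘ π) ∘ ⇑(1 : Equiv.Perm (Fin m)) = x ∘ π := by
        ext i; simp
      rw [hco]
      constructor
      · rintro ⟨h1, h2⟩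
        refine ⟨h1, fun i => ?_⟩
        have := h2 (π.symm i)
        simpa using this
      · rintro ⟨h1, h2⟩
        exact ⟨h1, fun i => h2 (π i)⟩
    calc volume (T π) = volume ((⇑(MeasurableEquiv.arrowCongr' π.symm
          (MeasurableEquiv.refl ℝ))) ⁻¹' (T 1)) := by rw [hpre]
      _ = volume (T 1) := hmp.measure_preimage
          (measurableSet_strictSimplex m t s 1).nullMeasurableSet
  -- the T π are pairwise disjoint
  have hdisj : Set.PairwiseDisjoint ((Finset.univ : Finset (Equiv.Perm (Fin m))) : Set _) T := by
    intro π _ ρ _ hne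
    refine Set.disjoint_left.2 fun x hxπ hxρ => hne ?_
    obtain ⟨h1, _⟩ := hxπ
    obtain ⟨h2, _⟩ := hxρ
    have hr : Set.range (x ∘ π) = Set.range (x ∘ ρ) := by
      rw [π.surjective.range_comp, ρ.surjective.range_comp]
    haveI : WellFoundedLT (Fin m) := Finite.to_wellFoundedLT
    have hcomp : x ∘ ⇑π = x ∘ ⇑ρ := (h1.range_inj h2).1 hr
    have hxinj : Function.Injective x := by
      intro a b hab
      have h3 : (x ∘ π) (π.symm a) = (x ∘ π) (π.symm b) := by
        simp only [Function.comp_apply, Equiv.apply_symm_apply]; exact hab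
      have := h1.injective h3
      exact π.symm.injective this
    exact Equiv.ext fun i => hxinj (congrFun hcomp i)
  -- sum the volumes
  have hsum : ∑ π : Equiv.Perm (Fin m), volume (T π)
      = volume (⋃ π ∈ (Finset.univ : Finset (Equiv.Perm (Fin m))), T π) :=
    (measure_biUnion_finset hdisj (fun π _ => measurableSet_strictSimplex m t s π)).symm
  have hsub : (⋃ π ∈ (Finset.univ : Finset (Equiv.Perm (Fin m))), T π)
      ⊆ Set.pi Set.univ (fun _ : Fin m => Set.Icc t s) := by
    intro x hx
    simp only [Set.mem_iUnion] at hx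
    obtain ⟨π, _, _, h2⟩ := hx
    intro i _
    exact h2 i
  have hcube : volume (Set.pi Set.univ (fun _ : Fin m => Set.Icc t s))
      = ENNReal.ofReal ((s - t) ^ m) := by
    rw [volume_pi_pi]
    simp only [Real.volume_Icc, Finset.prod_const, Finset.card_univ, Fintype.card_fin]
    rw [← ENNReal.ofReal_pow (by linarith : (0:ℝ) ≤ s - t)]
  have hfac : (Nat.factorial m : ℝ≥0∞) * volume (T 1) ≤ ENNReal.ofReal ((s - t) ^ m) := by
    calc (Nat.factorial m : ℝ≥0∞) * volume (T 1)
        = ∑ π : Equiv.Perm (Fin m), volume (T π) := by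
          rw [Finset.sum_congr rfl (fun π _ => hvol π), Finset.sum_const, Finset.card_univ,
            Fintype.card_perm, Fintype.card_fin, nsmul_eq_mul]
      _ = volume (⋃ π ∈ (Finset.univ : Finset (Equiv.Perm (Fin m))), T π) := hsum
      _ ≤ volume (Set.pi Set.univ (fun _ : Fin m => Set.Icc t s)) := measure_mono hsub
      _ = ENNReal.ofReal ((s - t) ^ m) := hcube
  -- the null set of non-injective tuples
  set N : Set (Fin m → ℝ) := ⋃ (p : Fin m × Fin m) (_ : p.1 ≠ p.2), {x | x p.1 = x p.2} with hN
  have hNnull : volume N = 0 := by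
    refine measure_iUnion_null fun p => ?_
    refine measure_iUnion_null fun hp => ?_
    have hset : {x : Fin m → ℝ | x p.1 = x p.2}
        = (LinearMap.ker ((LinearMap.proj p.1 : (Fin m → ℝ) →ₗ[ℝ] ℝ)
            - LinearMap.proj p.2) : Submodule ℝ (Fin m → ℝ)) := by
      ext x
      simp [LinearMap.mem_ker, sub_eq_zero]
    rw [hset]
    apply MeasureTheory.Measure.addHaar_submodule
    intro hker
    have h1 : (Pi.single p.2 (1:ℝ) : Fin m → ℝ) ∈
        LinearMap.ker ((LinearMap.proj p.1 : (Fin m → ℝ) →ₗ[ℝ] ℝ) - LinearMap.proj p.2) := by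
      rw [hker]; trivial
    rw [LinearMap.mem_ker, LinearMap.sub_apply, LinearMap.proj_apply, LinearMap.proj_apply,
      Pi.single_eq_same, Pi.single_eq_of_ne hp] at h1
    norm_num at h1
  -- the monotone simplex is contained in T 1 ∪ N
  have hSsub : {x : Fin m → ℝ | Monotone x ∧ ∀ i, x i ∈ Set.Icc t s} ⊆ T 1 ∪ N := by
    rintro x ⟨hmono, hIcc⟩
    by_cases hsm : StrictMono x
    · left
      refine ⟨?_, hIcc⟩
      have hco : x ∘ ⇑(1 : Equiv.Perm (Fin m)) = x := by ext i; simp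
      rw [hco]; exact hsm
    · right
      rw [StrictMono] at hsm
      push_neg at hsm
      obtain ⟨i, j, hij, hle⟩ := hsm
      refine Set.mem_iUnion.2 ⟨(i, j), Set.mem_iUnion.2 ⟨hij.ne, ?_⟩⟩
      exact le_antisymm (hmono hij.le) hle
  -- put everything together
  have h1 : volume {x : Fin m → ℝ | Monotone x ∧ ∀ i, x i ∈ Set.Icc t s} ≤ volume (T 1) := by
    calc volume {x : Fin m → ℝ | Monotone x ∧ ∀ i, x i ∈ Set.Icc t s}
        ≤ volume (T 1 ∪ N) := measure_mono hSsub
      _ ≤ volume (T 1) + volume N := measure_union_le _ _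
      _ = volume (T 1) := by rw [hNnull, add_zero]
  have h2 : volume (T 1) ≤ ENNReal.ofReal ((s - t) ^ m) / (Nat.factorial m : ℝ≥0∞) := by
    rw [ENNReal.le_div_iff_mul_le
      (Or.inl (by exact_mod_cast (Nat.factorial_pos m).ne'))
      (Or.inl (ENNReal.natCast_ne_top _))]
    rw [mul_comm]
    exact hfac
  refine h1.trans (h2.trans (le_of_eq ?_))
  rw [ENNReal.ofReal_div_of_pos (by exact_mod_cast Nat.factorial_pos m),
    ENNReal.ofReal_natCast]

lemma pairingTerm_le (C : ℝ) (k : ℝ → ℝ → ℝ)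
    (hk : Continuous fun p : ℝ × ℝ => k p.1 p.2)
    (hnn : ∀ x y, 0 ≤ k x y) (hub : ∀ x y, k x y ≤ C)
    (t s : ℝ) (hts : t ≤ s) (n : ℕ) :
    pairingTerm k n t s
      ≤ (2 * Real.sqrt C * (s - t)) ^ (2 * n) / (Nat.factorial (2 * n) : ℝ) := by
  have hC : 0 ≤ C := le_trans (hnn 0 0) (hub 0 0)
  have hst : (0:ℝ) ≤ s - t := by linarith
  set B : ℝ := (s - t) ^ (2 * n) / (Nat.factorial (2 * n) : ℝ) with hB
  have hBnn : 0 ≤ B := div_nonneg (pow_nonneg hst _) (Nat.cast_nonneg _)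
  set S := {x : Fin (2 * n) → ℝ | Monotone x ∧ ∀ i, x i ∈ Set.Icc t s} with hSdef
  have hmeasS : MeasurableSet S := measurableSet_monoSimplex (2 * n) t s
  have hvolS : volume S ≤ ENNReal.ofReal B := volume_monoSimplex_le (2 * n) t s hts
  have hfin : volume S < ⊤ := lt_of_le_of_lt hvolS ENNReal.ofReal_lt_top
  have hvolR : (volume S).toReal ≤ B := ENNReal.toReal_le_of_le_ofReal hBnn hvolS
  have hI : ∀ σ ∈ Finset.univ.filter (fun σ : Equiv.Perm (Fin (2 * n)) => IsNCPairing σ),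
      (∫ x in S, ∏ i ∈ Finset.univ.filter (fun i => i < σ i), k (x i) (x (σ i)))
        ≤ C ^ n * B := by
    intro σ hσ
    rw [Finset.mem_filter] at hσ
    have hσN := hσ.2
    have hcont : Continuous (fun x : Fin (2 * n) → ℝ =>
        ∏ i ∈ Finset.univ.filter (fun i => i < σ i), k (x i) (x (σ i))) := by
      refine continuous_finset_prod _ fun i _ => ?_
      have h1 : Continuous fun x : Fin (2 * n) → ℝ => ((x i, x (σ i)) : ℝ × ℝ) :=
        (continuous_apply i).prodMk (continuous_apply (σ i))
      exact hk.comp h1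
    have hbound : ∀ y ∈ S, ‖∏ i ∈ Finset.univ.filter (fun i => i < σ i),
        k (y i) (y (σ i))‖ ≤ C ^ n := by
      intro y _
      rw [Real.norm_eq_abs, abs_of_nonneg (Finset.prod_nonneg fun i _ => hnn _ _)]
      calc ∏ i ∈ Finset.univ.filter (fun i => i < σ i), k (y i) (y (σ i))
          ≤ ∏ _i ∈ Finset.univ.filter (fun i => i < σ i), C :=
            Finset.prod_le_prod (fun i _ => hnn _ _) (fun i _ => hub _ _)
        _ = C ^ n := by rw [Finset.prod_const, ncp_opener_card hσN]
    have hnorm := MeasureTheory.norm_setIntegral_le_of_norm_le_const hfin hbound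
    calc (∫ x in S, ∏ i ∈ Finset.univ.filter (fun i => i < σ i), k (x i) (x (σ i)))
        ≤ ‖∫ x in S, ∏ i ∈ Finset.univ.filter (fun i => i < σ i), k (x i) (x (σ i))‖ :=
          le_abs_self _
      _ ≤ C ^ n * (volume S).toReal := hnorm
      _ ≤ C ^ n * B := mul_le_mul_of_nonneg_left hvolR (pow_nonneg hC n)
  have hcard := ncp_card_le (2 * n)
  calc pairingTerm k n t s
      ≤ ∑ _σ ∈ Finset.univ.filter (fun σ : Equiv.Perm (Fin (2 * n)) => IsNCPairing σ),
          C ^ n * B := Finset.sum_le_sum hI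
    _ = (Finset.univ.filter (fun σ : Equiv.Perm (Fin (2 * n)) => IsNCPairing σ)).card
          * (C ^ n * B) := by rw [Finset.sum_const, nsmul_eq_mul]
    _ ≤ (2:ℝ) ^ (2 * n) * (C ^ n * B) := by
        apply mul_le_mul_of_nonneg_right _ (mul_nonneg (pow_nonneg hC n) hBnn)
        calc ((Finset.univ.filter
              (fun σ : Equiv.Perm (Fin (2 * n)) => IsNCPairing σ)).card : ℝ)
            ≤ ((2 ^ (2 * n) : ℕ) : ℝ) := by exact_mod_cast hcard
          _ = (2:ℝ) ^ (2 * n) := by push_cast; ring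
    _ = (2 * Real.sqrt C * (s - t)) ^ (2 * n) / (Nat.factorial (2 * n) : ℝ) := by
        have h1 : Real.sqrt C ^ (2 * n) = C ^ n := by
          rw [pow_mul, Real.sq_sqrt hC]
        rw [hB, mul_pow, mul_pow, h1]
        ring

/-- If the kernel is uniformly bounded by `C`, the pairing-series solution of the Kraichnan
equation satisfies `H(s,t) ≤ exp(2√C (s−t))` for all `s ≥ t`. -/
theorem kraichnanSeries_le_of_bounded (C : ℝ) (k : ℝ → ℝ → ℝ)
    (hk : Continuous fun p : ℝ × ℝ => k p.1 p.2)
    (hnn : ∀ x y, 0 ≤ k x y) (hub : ∀ x y, k x y ≤ C)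
    (t s : ℝ) (ht : 0 ≤ t) (hts : t ≤ s) :
    kraichnanSeries k s t ≤ Real.exp (2 * Real.sqrt C * (s - t)) := by
  have hC : 0 ≤ C := le_trans (hnn 0 0) (hub 0 0)
  set x := 2 * Real.sqrt C * (s - t) with hx
  have hx0 : 0 ≤ x :=
    mul_nonneg (mul_nonneg (by norm_num) (Real.sqrt_nonneg C)) (by linarith)
  rw [kraichnanSeries]
  apply tsum_le_of_sum_le' (Real.exp_nonneg _)
  intro F
  obtain ⟨N, hsubN⟩ := (F.image (fun n => 2 * n)).exists_nat_subset_range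
  calc ∑ n ∈ F, pairingTerm k n t s
      ≤ ∑ n ∈ F, x ^ (2 * n) / (Nat.factorial (2 * n) : ℝ) :=
        Finset.sum_le_sum (fun n _ => pairingTerm_le C k hk hnn hub t s hts n)
    _ = ∑ j ∈ F.image (fun n => 2 * n), x ^ j / (Nat.factorial j : ℝ) := by
        rw [Finset.sum_image (fun a _ b _ h => by omega)]
    _ ≤ ∑ j ∈ Finset.range N, x ^ j / (Nat.factorial j : ℝ) := by
        apply Finset.sum_le_sum_of_subset_of_nonneg hsubN
        intro j _ _
        positivity
    _ ≤ Real.exp x := Real.sum_le_exp_of_nonneg hx0 N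
end

section
/- Suppose k : ℝ≥0 × ℝ≥0 → ℝ is continuous and bounded by C, and H, H̃ are two continuous functions on {(s,t) : s ≥ t ≥ 0} with |H(s,t)|, |H̃(s,t)| ≤ M e^{M(s−t)}, both satisfying H(s,t) = 1 + ∫_t^s ∫_t^r H(r,u) H(u,t) k(r,u) du dr for all s ≥ t. Then H = H̃. -/
open MeasureTheory

lemma kraichnan_arith (C' B K fct x : ℝ) (n : ℕ) (hx : 0 ≤ x) (hB : 0 ≤ B) (hK : 0 ≤ K)
    (hfct : 0 < fct) (hC' : 0 ≤ C') (hsc : 2 * C' * x ≤ K * ((n:ℝ)+2)) :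
    2 * (C' * (B * K ^ n / fct)) / ((n:ℝ)+1) * (x ^ (n+2) / ((n:ℝ)+2))
      ≤ B * (K * x) ^ (n+1) / (((n:ℝ)+1) * fct) := by
  have hn1 : (0:ℝ) < (n:ℝ)+1 := by positivity
  have hn2 : (0:ℝ) < (n:ℝ)+2 := by positivity
  have hD : (0:ℝ) ≤ B * K ^ n * x ^ (n+1) / (((n:ℝ)+1) * fct) := by positivity
  have lhs_eq : 2 * (C' * (B * K ^ n / fct)) / ((n:ℝ)+1) * (x ^ (n+2) / ((n:ℝ)+2))
      = (2 * C' * x / ((n:ℝ)+2)) * (B * K ^ n * x ^ (n+1) / (((n:ℝ)+1) * fct)) := by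
    field_simp; ring
  have rhs_eq : B * (K * x) ^ (n+1) / (((n:ℝ)+1) * fct)
      = K * (B * K ^ n * x ^ (n+1) / (((n:ℝ)+1) * fct)) := by
    rw [mul_pow, pow_succ]; field_simp
  rw [lhs_eq, rhs_eq]
  exact mul_le_mul_of_nonneg_right ((div_le_iff₀ hn2).mpr hsc) hD

set_option maxHeartbeats 2000000 in
lemma kraichnan_aux (C M T : ℝ) (hC : 0 < C) (hM : 0 < M) (hT : 0 ≤ T)
    (k H H' : ℝ → ℝ → ℝ) (hk : Continuous fun p : ℝ × ℝ => k p.1 p.2)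
    (hkb : ∀ x y, |k x y| ≤ C)
    (hHc : Continuous fun p : ℝ × ℝ => H p.1 p.2)
    (hH'c : Continuous fun p : ℝ × ℝ => H' p.1 p.2)
    (hHb : ∀ s t, 0 ≤ t → t ≤ s → s ≤ T → |H s t| ≤ M * Real.exp (M * (s - t)))
    (hH'b : ∀ s t, 0 ≤ t → t ≤ s → s ≤ T → |H' s t| ≤ M * Real.exp (M * (s - t)))
    (hHeq : ∀ s t, 0 ≤ t → t ≤ s →
      H s t = 1 + ∫ r in t..s, ∫ u in t..r, H r u * H u t * k r u)
    (hH'eq : ∀ s t, 0 ≤ t → t ≤ s →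
      H' s t = 1 + ∫ r in t..s, ∫ u in t..r, H' r u * H' u t * k r u) :
    ∀ s t, 0 ≤ t → t ≤ s → s ≤ T → H s t = H' s t := by
  have heMT : (0:ℝ) < Real.exp (M * T) := Real.exp_pos _
  obtain ⟨B, hB⟩ : ∃ B : ℝ, B = 2 * M * Real.exp (M * T) := ⟨_, rfl⟩
  obtain ⟨K, hK⟩ : ∃ K : ℝ, K = C * M * Real.exp (M * T) * T + 1 := ⟨_, rfl⟩
  have hBpos : 0 < B := by rw [hB]; positivity
  have hKpos : 0 < K := by rw [hK]; positivity
  have key : ∀ n : ℕ, ∀ a b, 0 ≤ b → b ≤ a → a ≤ T →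
      |H a b - H' a b| ≤ B * (K * (a - b)) ^ n / n.factorial := by
    intro n
    induction n with
    | zero =>
      intro a b hb hba haT
      have h1 := hHb a b hb hba haT
      have h2 := hH'b a b hb hba haT
      have hexp : Real.exp (M * (a - b)) ≤ Real.exp (M * T) :=
        Real.exp_le_exp.mpr (by nlinarith)
      simp only [pow_zero, Nat.factorial_zero, Nat.cast_one, mul_one, div_one]
      calc |H a b - H' a b| ≤ |H a b| + |H' a b| := abs_sub _ _
        _ ≤ B := by rw [hB]; nlinarith
    | succ n ih =>
      intro a b hb hba haT

      have heMT : (0:ℝ) < Real.exp (M * T) := Real.exp_pos _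
      set c0 : ℝ := C * (M * Real.exp (M * T)) * (B * K ^ n / n.factorial) with hc0
      have hc0pos : 0 < c0 := by positivity
      have hcont : ∀ (G : ℝ → ℝ → ℝ), (Continuous fun p : ℝ × ℝ => G p.1 p.2) →
          Continuous fun p : ℝ × ℝ => G p.1 p.2 * G p.2 b * k p.1 p.2 := by
        intro G hG
        exact (hG.mul (hG.comp (by fun_prop : Continuous fun p : ℝ × ℝ => (p.2, b)))).mul hk
      have hfc := hcont H hHc
      have hf'c := hcont H' hH'c
      set F : ℝ → ℝ := fun r => ∫ u in b..r, H r u * H u b * k r u with hF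
      set F' : ℝ → ℝ := fun r => ∫ u in b..r, H' r u * H' u b * k r u with hF'
      have hFc : Continuous F :=
        intervalIntegral.continuous_parametric_intervalIntegral_of_continuous
          (f := fun r u => H r u * H u b * k r u) (by exact hfc) continuous_id
      have hF'c : Continuous F' :=
        intervalIntegral.continuous_parametric_intervalIntegral_of_continuous
          (f := fun r u => H' r u * H' u b * k r u) (by exact hf'c) continuous_id
      have hdiff : H a b - H' a b = ∫ r in b..a, (F r - F' r) := by
        rw [hHeq a b hb hba, hH'eq a b hb hba,
          intervalIntegral.integral_sub (hFc.intervalIntegrable b a) (hF'c.intervalIntegrable b a)]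
        ring
      have inner_pt : ∀ r u, b ≤ u → u ≤ r → r ≤ a →
          |H r u * H u b * k r u - H' r u * H' u b * k r u| ≤ c0 * ((r - u) ^ n + (u - b) ^ n) := by
        intro r u hbu hur hra
        have hu0 : 0 ≤ u := le_trans hb hbu
        have hrT : r ≤ T := le_trans hra haT
        have huT : u ≤ T := le_trans hur hrT
        have hru : (0:ℝ) ≤ r - u := by linarith
        have hub : (0:ℝ) ≤ u - b := by linarith
        have e1 : Real.exp (M * (u - b)) ≤ Real.exp (M * T) := Real.exp_le_exp.mpr (by nlinarith)
        have e2 : Real.exp (M * (r - u)) ≤ Real.exp (M * T) := Real.exp_le_exp.mpr (by nlinarith)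
        have b1 : |H u b| ≤ M * Real.exp (M * T) := (hHb u b hb hbu huT).trans (by nlinarith)
        have b2 : |H' r u| ≤ M * Real.exp (M * T) := (hH'b r u hu0 hur hrT).trans (by nlinarith)
        have d1 : |H r u - H' r u| ≤ B * K ^ n * (r - u) ^ n / n.factorial := by
          have := ih r u hu0 hur hrT
          rwa [mul_pow, ← mul_assoc] at this
        have d2 : |H u b - H' u b| ≤ B * K ^ n * (u - b) ^ n / n.factorial := by
          have := ih u b hb hbu huT
          rwa [mul_pow, ← mul_assoc] at this
        have hnn1 : (0:ℝ) ≤ B * K ^ n * (r - u) ^ n / n.factorial :=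
          div_nonneg (mul_nonneg (mul_nonneg hBpos.le (pow_nonneg hKpos.le n)) (pow_nonneg hru n))
            (Nat.cast_nonneg _)
        have hnn2 : (0:ℝ) ≤ B * K ^ n * (u - b) ^ n / n.factorial :=
          div_nonneg (mul_nonneg (mul_nonneg hBpos.le (pow_nonneg hKpos.le n)) (pow_nonneg hub n))
            (Nat.cast_nonneg _)
        have expand : H r u * H u b * k r u - H' r u * H' u b * k r u
            = (H r u - H' r u) * H u b * k r u + H' r u * (H u b - H' u b) * k r u := by ring
        rw [expand]
        have habs1 : |(H r u - H' r u) * H u b * k r u|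
            ≤ (B * K ^ n * (r - u) ^ n / n.factorial) * (M * Real.exp (M * T)) * C := by
          rw [abs_mul, abs_mul]
          exact mul_le_mul (mul_le_mul d1 b1 (abs_nonneg _) hnn1) (hkb r u) (abs_nonneg _)
            (mul_nonneg hnn1 (by positivity))
        have habs2 : |H' r u * (H u b - H' u b) * k r u|
            ≤ (M * Real.exp (M * T)) * (B * K ^ n * (u - b) ^ n / n.factorial) * C := by
          rw [abs_mul, abs_mul]
          exact mul_le_mul (mul_le_mul b2 d2 (abs_nonneg _) (by positivity)) (hkb r u) (abs_nonneg _)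
            (mul_nonneg (by positivity) hnn2)
        calc |(H r u - H' r u) * H u b * k r u + H' r u * (H u b - H' u b) * k r u|
            ≤ |(H r u - H' r u) * H u b * k r u| + |H' r u * (H u b - H' u b) * k r u| := abs_add_le _ _
          _ ≤ (B * K ^ n * (r - u) ^ n / n.factorial) * (M * Real.exp (M * T)) * C
              + (M * Real.exp (M * T)) * (B * K ^ n * (u - b) ^ n / n.factorial) * C := by
              linarith
          _ = c0 * ((r - u) ^ n + (u - b) ^ n) := by rw [hc0]; ring
      have inner_bd : ∀ r, b ≤ r → r ≤ a →
          |F r - F' r| ≤ 2 * c0 * (r - b) ^ (n+1) / (n+1) := by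
        intro r hbr hra
        have hrb : (0:ℝ) ≤ r - b := by linarith
        have hin : F r - F' r
            = ∫ u in b..r, (H r u * H u b * k r u - H' r u * H' u b * k r u) := by
          have h1 : IntervalIntegrable (fun u => H r u * H u b * k r u) volume b r :=
            (hfc.comp (by fun_prop : Continuous fun u : ℝ => ((r, u) : ℝ × ℝ))).intervalIntegrable b r
          have h2 : IntervalIntegrable (fun u => H' r u * H' u b * k r u) volume b r :=
            (hf'c.comp (by fun_prop : Continuous fun u : ℝ => ((r, u) : ℝ × ℝ))).intervalIntegrable b r
          exact (intervalIntegral.integral_sub h1 h2).symm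
        have hg : IntervalIntegrable (fun u => c0 * ((r - u) ^ n + (u - b) ^ n)) volume b r :=
          (by fun_prop : Continuous fun u : ℝ => c0 * ((r - u) ^ n + (u - b) ^ n)).intervalIntegrable b r
        have hbd := intervalIntegral.norm_integral_le_abs_of_norm_le (μ := volume) (a := b) (b := r)
          (f := fun u => H r u * H u b * k r u - H' r u * H' u b * k r u)
          (g := fun u => c0 * ((r - u) ^ n + (u - b) ^ n)) ?_ hg
        · have i1 : (∫ u in b..r, (r - u) ^ n) = (r - b) ^ (n+1) / (n+1) := by
            rw [intervalIntegral.integral_comp_sub_left (fun u : ℝ => u ^ n) r]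
            simp [integral_pow]
          have i2 : (∫ u in b..r, (u - b) ^ n) = (r - b) ^ (n+1) / (n+1) := by
            rw [intervalIntegral.integral_comp_sub_right (fun u : ℝ => u ^ n) b]
            simp [integral_pow]
          have hval : (∫ u in b..r, c0 * ((r - u) ^ n + (u - b) ^ n))
              = 2 * c0 * (r - b) ^ (n+1) / (n+1) := by
            rw [intervalIntegral.integral_const_mul,
              intervalIntegral.integral_add
                ((by fun_prop : Continuous fun u : ℝ => (r - u) ^ n).intervalIntegrable b r)
                ((by fun_prop : Continuous fun u : ℝ => (u - b) ^ n).intervalIntegrable b r),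
              i1, i2]
            ring
          have hnnv : (0:ℝ) ≤ 2 * c0 * (r - b) ^ (n+1) / (n+1) :=
            div_nonneg (mul_nonneg (by positivity) (pow_nonneg hrb _)) (by positivity)
          rw [hin]
          calc |∫ u in b..r, (H r u * H u b * k r u - H' r u * H' u b * k r u)|
              ≤ |∫ u in b..r, c0 * ((r - u) ^ n + (u - b) ^ n)| := hbd
            _ = 2 * c0 * (r - b) ^ (n+1) / (n+1) := by rw [hval, abs_of_nonneg hnnv]
        · filter_upwards [ae_restrict_mem measurableSet_uIoc] with u hu
          rw [Set.uIoc_of_le hbr] at hu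
          exact inner_pt r u (le_of_lt hu.1) hu.2 hra
      -- outer estimate
      have hab : (0:ℝ) ≤ a - b := by linarith
      have habT : a - b ≤ T := by linarith
      have hgout : IntervalIntegrable (fun r => 2 * c0 * (r - b) ^ (n+1) / (n+1)) volume b a :=
        (by fun_prop : Continuous fun r : ℝ => 2 * c0 * (r - b) ^ (n+1) / (n+1)).intervalIntegrable b a
      have hout := intervalIntegral.norm_integral_le_abs_of_norm_le (μ := volume) (a := b) (b := a)
        (f := fun r => F r - F' r) (g := fun r => 2 * c0 * (r - b) ^ (n+1) / (n+1)) ?_ hgout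
      · have j1 : (∫ r in b..a, (r - b) ^ (n+1)) = (a - b) ^ (n+2) / (n+2) := by
          rw [intervalIntegral.integral_comp_sub_right (fun u : ℝ => u ^ (n+1)) b]
          simp [integral_pow]
          ring
        have hvout : (∫ r in b..a, 2 * c0 * (r - b) ^ (n+1) / (n+1))
            = 2 * c0 / (n+1) * ((a - b) ^ (n+2) / (n+2)) := by
          have e : (fun r => 2 * c0 * (r - b) ^ (n+1) / (n+1))
              = fun r => (2 * c0 / (n+1)) * (r - b) ^ (n+1) := by funext r; ring
          rw [e, intervalIntegral.integral_const_mul, j1]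
        have hnnout : (0:ℝ) ≤ 2 * c0 / (n+1) * ((a - b) ^ (n+2) / (n+2)) :=
          mul_nonneg (by positivity) (div_nonneg (pow_nonneg hab _) (by positivity))
        have hfin : 2 * c0 / (n+1) * ((a - b) ^ (n+2) / (n+2))
            ≤ B * (K * (a - b)) ^ (n+1) / (n+1).factorial := by
          have hfn : (0:ℝ) < n.factorial := by exact_mod_cast Nat.factorial_pos n
          have hfact : ((n+1).factorial : ℝ) = ((n:ℝ) + 1) * n.factorial := by
            rw [Nat.factorial_succ]; push_cast; ring
          have hsc : 2 * (C * (M * Real.exp (M * T))) * (a - b) ≤ K * ((n:ℝ)+2) := by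
            have h1 : C * M * Real.exp (M * T) * (a - b) ≤ C * M * Real.exp (M * T) * T :=
              mul_le_mul_of_nonneg_left habT (by positivity)
            have h2 : K * 2 ≤ K * ((n:ℝ) + 2) :=
              mul_le_mul_of_nonneg_left (by linarith [Nat.cast_nonneg (α := ℝ) n]) hKpos.le
            nlinarith [h1, h2, hK]
          rw [hc0, hfact]
          exact kraichnan_arith (C * (M * Real.exp (M * T))) B K (n.factorial : ℝ) (a - b) n
            hab hBpos.le hKpos.le hfn (by positivity) hsc
        rw [hdiff]
        calc |∫ r in b..a, (F r - F' r)| ≤ |∫ r in b..a, 2 * c0 * (r - b) ^ (n+1) / (n+1)| := hout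
          _ = 2 * c0 / (n+1) * ((a - b) ^ (n+2) / (n+2)) := by rw [hvout, abs_of_nonneg hnnout]
          _ ≤ B * (K * (a - b)) ^ (n+1) / (n+1).factorial := hfin
      · filter_upwards [ae_restrict_mem measurableSet_uIoc] with r hr
        rw [Set.uIoc_of_le hba] at hr
        exact inner_bd r (le_of_lt hr.1) hr.2
  intro s t ht hts hsT
  have hlim : Filter.Tendsto (fun n : ℕ => B * (K * (s - t)) ^ n / n.factorial)
      Filter.atTop (nhds 0) := by
    have := (FloorSemiring.tendsto_pow_div_factorial_atTop (K := ℝ) (K * (s - t))).const_mul B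
    simpa [mul_div_assoc] using this
  have hle : |H s t - H' s t| ≤ 0 :=
    ge_of_tendsto' hlim (fun n => key n s t ht hts hsT)
  have := abs_nonpos_iff.mp hle
  linarith [sub_eq_zero.mp this]

/-- Uniqueness for the integrated Kraichnan equation in the class of continuous functions
with exponential growth `|H(s,t)| ≤ M e^{M(s−t)}`. -/
theorem kraichnan_uniqueness (C M : ℝ) (hC : 0 < C) (hM : 0 < M)
    (k : ℝ → ℝ → ℝ) (hk : Continuous fun p : ℝ × ℝ => k p.1 p.2)
    (hkb : ∀ x y, |k x y| ≤ C)
    (H H' : ℝ → ℝ → ℝ)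
    (hHc : ContinuousOn (fun p : ℝ × ℝ => H p.1 p.2) {p | 0 ≤ p.2 ∧ p.2 ≤ p.1})
    (hH'c : ContinuousOn (fun p : ℝ × ℝ => H' p.1 p.2) {p | 0 ≤ p.2 ∧ p.2 ≤ p.1})
    (hHb : ∀ s t, 0 ≤ t → t ≤ s → |H s t| ≤ M * Real.exp (M * (s - t)))
    (hH'b : ∀ s t, 0 ≤ t → t ≤ s → |H' s t| ≤ M * Real.exp (M * (s - t)))
    (hHeq : ∀ s t, 0 ≤ t → t ≤ s →
      H s t = 1 + ∫ r in t..s, ∫ u in t..r, H r u * H u t * k r u)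
    (hH'eq : ∀ s t, 0 ≤ t → t ≤ s →
      H' s t = 1 + ∫ r in t..s, ∫ u in t..r, H' r u * H' u t * k r u) :
    ∀ s t, 0 ≤ t → t ≤ s → H s t = H' s t := by
  have hScl : IsClosed {p : ℝ × ℝ | 0 ≤ p.2 ∧ p.2 ≤ p.1} :=
    (isClosed_le continuous_const continuous_snd).inter
      (isClosed_le continuous_snd continuous_fst)
  obtain ⟨G, hG⟩ := ContinuousMap.exists_restrict_eq (Y := ℝ) hScl
    ⟨_, hHc.restrict⟩
  obtain ⟨G', hG'⟩ := ContinuousMap.exists_restrict_eq (Y := ℝ) hScl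
    ⟨_, hH'c.restrict⟩
  have hGeq : ∀ a b : ℝ, 0 ≤ b → b ≤ a → G (a, b) = H a b := by
    intro a b h1 h2
    exact DFunLike.congr_fun hG (⟨(a, b), ⟨h1, h2⟩⟩ : {p : ℝ × ℝ | 0 ≤ p.2 ∧ p.2 ≤ p.1})
  have hG'eq : ∀ a b : ℝ, 0 ≤ b → b ≤ a → G' (a, b) = H' a b := by
    intro a b h1 h2
    exact DFunLike.congr_fun hG' (⟨(a, b), ⟨h1, h2⟩⟩ : {p : ℝ × ℝ | 0 ≤ p.2 ∧ p.2 ≤ p.1})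
  intro s t ht hts
  set He : ℝ → ℝ → ℝ := fun a b => G (a, b) with hHe
  set H'e : ℝ → ℝ → ℝ := fun a b => G' (a, b) with hH'e
  have hHec : Continuous fun p : ℝ × ℝ => He p.1 p.2 :=
    G.continuous.comp (continuous_fst.prodMk continuous_snd)
  have hH'ec : Continuous fun p : ℝ × ℝ => H'e p.1 p.2 :=
    G'.continuous.comp (continuous_fst.prodMk continuous_snd)
  have transfer_eq : ∀ (J : ℝ → ℝ → ℝ) (Je : ℝ → ℝ → ℝ),
      (∀ a b : ℝ, 0 ≤ b → b ≤ a → Je a b = J a b) →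
      (∀ s t, 0 ≤ t → t ≤ s → J s t = 1 + ∫ r in t..s, ∫ u in t..r, J r u * J u t * k r u) →
      ∀ s t, 0 ≤ t → t ≤ s →
        Je s t = 1 + ∫ r in t..s, ∫ u in t..r, Je r u * Je u t * k r u := by
    intro J Je hJe hJeq a b hb hba
    rw [hJe a b hb hba, hJeq a b hb hba]
    congr 1
    apply intervalIntegral.integral_congr
    intro r hr
    rw [Set.uIcc_of_le hba] at hr
    apply intervalIntegral.integral_congr
    intro u hu
    rw [Set.uIcc_of_le hr.1] at hu
    simp only [hJe r u (le_trans hb hu.1) hu.2, hJe u b hb hu.1]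
  have hHeeq := transfer_eq H He (fun a b h1 h2 => hGeq a b h1 h2) hHeq
  have hH'eeq := transfer_eq H' H'e (fun a b h1 h2 => hG'eq a b h1 h2) hH'eq
  have := kraichnan_aux C M s hC hM (le_trans ht hts) k He H'e hk hkb hHec hH'ec
    (fun a b h1 h2 _ => by rw [show He a b = H a b from hGeq a b h1 h2]; exact hHb a b h1 h2)
    (fun a b h1 h2 _ => by rw [show H'e a b = H' a b from hG'eq a b h1 h2]; exact hH'b a b h1 h2)
    hHeeq hH'eeq s t ht hts le_rfl
  rw [show He s t = H s t from hGeq s t ht hts,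
    show H'e s t = H' s t from hG'eq s t ht hts] at this
  exact this
end

section
/- If k(t,s) = h(t)h(s) for a continuous nonnegative function h, then H(s,t) = E[exp(S ∫_t^s h(u) du)], where S has the semicircle law, solves the Kraichnan equation ∂_s H(s,t) = ∫_t^s H(s,u)H(u,t)k(s,u)du with H(t,t)=1. -/
open MeasureTheory

/-- The semicircle density: `(1/(2π))·√(4−x²)` on `[−2,2]`, `0` elsewhere. -/
noncomputable def semicircleDensity (y : ℝ) : ℝ :=
  Set.indicator (Set.Icc (-2) 2) (fun y => (1 / (2 * Real.pi)) * Real.sqrt (4 - y ^ 2)) y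

namespace SCA
open Real


lemma ρ_nonneg (y : ℝ) : 0 ≤ semicircleDensity y := by
  unfold semicircleDensity
  apply Set.indicator_nonneg
  intro y _
  positivity

lemma ρ_measurable : Measurable semicircleDensity := by
  unfold semicircleDensity
  exact (Measurable.indicator (by fun_prop) measurableSet_Icc)

lemma abs_le_of_ρ_ne {y : ℝ} (hy : semicircleDensity y ≠ 0) : |y| ≤ 2 := by
  by_contra hab
  apply hy
  unfold semicircleDensity
  apply Set.indicator_of_notMem
  intro hmem
  rw [Set.mem_Icc] at hmem
  rw [abs_le] at hab
  exact hab ⟨hmem.1, hmem.2⟩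

lemma integrable_mul {f : ℝ → ℝ} (hf : Continuous f) :
    Integrable (fun y => f y * semicircleDensity y) := by
  have : (fun y => f y * semicircleDensity y) =
      Set.indicator (Set.Icc (-2:ℝ) 2) (fun y => f y * ((1 / (2 * Real.pi)) * Real.sqrt (4 - y ^ 2))) := by
    funext y
    unfold semicircleDensity
    by_cases hy : y ∈ Set.Icc (-2:ℝ) 2 <;> simp [hy]
  rw [this]
  rw [integrable_indicator_iff measurableSet_Icc]
  apply ContinuousOn.integrableOn_compact isCompact_Icc
  exact (hf.mul (continuous_const.mul ((continuous_const.sub (continuous_pow 2)).sqrt))).continuousOn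


noncomputable def m (n : ℕ) : ℝ := ∫ y : ℝ, y ^ n * semicircleDensity y

noncomputable def J (n : ℕ) : ℝ := ∫ θ in (-(π/2))..(π/2), Real.sin θ ^ n * Real.cos θ ^ 2

lemma m_eq_J (n : ℕ) : m n = 2 ^ (n+1) / π * J n := by
  have hπ := Real.pi_pos
  have h1 : m n = ∫ y in (-2:ℝ)..2, y ^ n * ((1 / (2 * π)) * Real.sqrt (4 - y ^ 2)) := by
    rw [intervalIntegral.integral_of_le (by norm_num : (-2:ℝ) ≤ 2),
      ← MeasureTheory.integral_Icc_eq_integral_Ioc,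
      ← MeasureTheory.integral_indicator measurableSet_Icc]
    unfold m semicircleDensity
    congr 1
    funext y
    by_cases hy : y ∈ Set.Icc (-2:ℝ) 2 <;> simp [hy]
  have h2 : ∫ y in (-2:ℝ)..2, y ^ n * ((1 / (2 * π)) * Real.sqrt (4 - y ^ 2))
      = ∫ θ in (-(π/2))..(π/2), (2 * Real.cos θ) •
          (((fun y => y ^ n * ((1 / (2 * π)) * Real.sqrt (4 - y ^ 2))) ∘ (fun θ => 2 * Real.sin θ)) θ) := by
    rw [intervalIntegral.integral_comp_smul_deriv
      (f := fun θ => 2 * Real.sin θ) (f' := fun θ => 2 * Real.cos θ)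
      (fun x _ => (Real.hasDerivAt_sin x).const_mul 2)
      ((continuous_const.mul Real.continuous_cos).continuousOn)
      (by continuity)]
    norm_num
  have h3 : ∫ θ in (-(π/2))..(π/2), (2 * Real.cos θ) •
          (((fun y => y ^ n * ((1 / (2 * π)) * Real.sqrt (4 - y ^ 2))) ∘ (fun θ => 2 * Real.sin θ)) θ)
      = ∫ θ in (-(π/2))..(π/2), (2 ^ (n+1) / π) * (Real.sin θ ^ n * Real.cos θ ^ 2) := by
    apply intervalIntegral.integral_congr
    intro θ hθ
    rw [Set.uIcc_of_le (by linarith : (-(π/2)) ≤ π/2)] at hθ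
    have hcos : 0 ≤ Real.cos θ := Real.cos_nonneg_of_mem_Icc hθ
    have hs : Real.sqrt (4 - (2 * Real.sin θ) ^ 2) = 2 * Real.cos θ := by
      have h4 : 4 - (2 * Real.sin θ) ^ 2 = (2 * Real.cos θ) ^ 2 := by
        nlinarith [Real.sin_sq_add_cos_sq θ]
      rw [h4, Real.sqrt_sq (by linarith)]
    simp only [Function.comp_apply, smul_eq_mul, hs]
    rw [mul_pow]
    field_simp
    ring
  rw [h1, h2, h3, intervalIntegral.integral_const_mul]
  rfl

lemma J_odd (n : ℕ) : J (2*n+1) = 0 := by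
  have h := intervalIntegral.integral_comp_neg (a := -(π/2)) (b := π/2)
    (fun θ => Real.sin θ ^ (2*n+1) * Real.cos θ ^ 2)
  simp only [neg_neg] at h
  simp only [Real.sin_neg, Real.cos_neg, Odd.neg_pow (odd_two_mul_add_one n), neg_mul,
    intervalIntegral.integral_neg] at h
  have : J (2*n+1) = - J (2*n+1) := by unfold J; linarith [h]
  linarith [this]

lemma W_eq (k : ℕ) : (∫ θ in (-(π/2))..(π/2), Real.sin θ ^ (2*k))
    = π * ∏ i ∈ Finset.range k, (2 * (i:ℝ) + 1) / (2 * i + 2) := by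
  have hper : Function.Periodic (fun θ => Real.sin θ ^ (2*k)) π := by
    intro x
    simp [Real.sin_add_pi, Even.neg_pow (even_two_mul k)]
  have := hper.intervalIntegral_add_eq (-(π/2)) 0
  rw [show -(π/2) + π = π/2 by ring, zero_add] at this
  rw [this, integral_sin_pow_even]

lemma J_even (k : ℕ) : J (2*k)
    = π * (∏ i ∈ Finset.range k, (2 * (i:ℝ) + 1) / (2 * i + 2)) / (2*k+2) := by
  have h1 : J (2*k) = (∫ θ in (-(π/2))..(π/2), Real.sin θ ^ (2*k))
      - ∫ θ in (-(π/2))..(π/2), Real.sin θ ^ (2*(k+1)) := by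
    unfold J
    rw [← intervalIntegral.integral_sub ((by fun_prop : Continuous fun θ => Real.sin θ ^ (2*k)).intervalIntegrable _ _)
      ((by fun_prop : Continuous fun θ => Real.sin θ ^ (2*(k+1))).intervalIntegrable _ _)]
    apply intervalIntegral.integral_congr
    intro θ _
    have hc : Real.cos θ ^ 2 = 1 - Real.sin θ ^ 2 := by
      linarith [Real.sin_sq_add_cos_sq θ]
    simp only [show 2*(k+1) = 2*k+2 by ring]
    show Real.sin θ ^ (2*k) * Real.cos θ ^ 2 = Real.sin θ ^ (2*k) - Real.sin θ ^ (2*k+2)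
    rw [pow_add, hc]
    ring
  rw [h1, W_eq, W_eq, Finset.prod_range_succ]
  push_cast
  field_simp
  ring


lemma P_eq (n : ℕ) : (∏ i ∈ Finset.range n, (2 * (i:ℝ) + 1) / (2 * i + 2))
    = (Nat.centralBinom n : ℝ) / 4 ^ n := by
  induction n with
  | zero => simp [Nat.centralBinom_zero]
  | succ n ih =>
    rw [Finset.prod_range_succ, ih]
    have key : ((n:ℝ) + 1) * (Nat.centralBinom (n+1) : ℝ)
        = 2 * (2 * n + 1) * (Nat.centralBinom n : ℝ) := by
      exact_mod_cast Nat.succ_mul_centralBinom_succ n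
    have h4 : (4:ℝ) ^ n ≠ 0 := by positivity
    have h2 : (2 * (n:ℝ) + 2) ≠ 0 := by positivity
    rw [div_mul_div_comm, div_eq_div_iff (by positivity) (by positivity)]
    push_cast
    linear_combination (-2 * (4:ℝ)^n) * key

lemma sum_even_aux (g : ℕ → ℝ) (p : ℕ) :
    ∑ i ∈ Finset.range (2*p+1), (if Even i then g (i/2) else 0)
      = ∑ a ∈ Finset.range (p+1), g a := by
  induction p with
  | zero => simp
  | succ p ih =>
    rw [show 2*(p+1)+1 = (2*p+1)+1+1 from by ring, Finset.sum_range_succ,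
      Finset.sum_range_succ, ih, Finset.sum_range_succ]
    have e1 : ¬ Even (2*p+1) := by rw [Nat.even_iff]; omega
    have e2 : Even (2*p+1+1) := by rw [Nat.even_iff]; omega
    have e3 : (2*p+1+1)/2 = p+1 := by omega
    rw [if_neg e1, if_pos e2, e3]
    simp [Finset.sum_range_succ]


lemma m_even (n : ℕ) : m (2*n) = (catalan n : ℝ) := by
  rw [m_eq_J, J_even, P_eq]
  have hπ : (π:ℝ) ≠ 0 := Real.pi_ne_zero
  have key : ((n:ℝ) + 1) * (catalan n : ℝ) = (Nat.centralBinom n : ℝ) := by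
    exact_mod_cast succ_mul_catalan_eq_centralBinom n
  have h2 : (2:ℝ)^(2*n+1) = 2 * 4^n := by
    rw [pow_succ, pow_mul]; norm_num; ring
  rw [h2]
  have h4 : (4:ℝ)^n ≠ 0 := by positivity
  field_simp
  linear_combination (-1:ℝ) * key

lemma m_odd (n : ℕ) : m (2*n+1) = 0 := by
  rw [m_eq_J, J_odd, mul_zero]

lemma m_zero : m 0 = 1 := by
  have := m_even 0
  simpa using this

lemma integral_ρ : (∫ y : ℝ, semicircleDensity y) = 1 := by
  have := m_zero
  unfold m at this
  simpa using this


lemma m_if (k : ℕ) : m k = if Even k then (catalan (k/2) : ℝ) else 0 := by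
  rcases Nat.even_or_odd k with ⟨p, hp⟩ | ⟨p, hp⟩
  · have h2 : k = 2*p := by omega
    subst h2
    have hd : (2*p)/2 = p := by omega
    rw [if_pos ⟨p, by ring⟩, m_even, hd]
  · subst hp
    rw [if_neg (by rw [Nat.even_iff]; omega), m_odd]

lemma m_nonneg (k : ℕ) : 0 ≤ m k := by
  rw [m_if]
  split <;> positivity

lemma m_le (k : ℕ) : m k ≤ 2 ^ k := by
  -- analytic bound: m k = ∫ y^k ρ ≤ ∫ 2^k ρ for even k; odd are 0
  rw [m_if]
  split
  · next he =>
    obtain ⟨p, hp⟩ := he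
    have hk : k = 2*p := by omega
    subst hk
    have h1 : m (2*p) ≤ 2 ^ (2*p) := by
      unfold m
      calc ∫ y : ℝ, y ^ (2*p) * semicircleDensity y
          ≤ ∫ y : ℝ, 2 ^ (2*p) * semicircleDensity y := by
            apply integral_mono (integrable_mul (continuous_pow _))
              (integrable_mul continuous_const)
            intro y
            by_cases hy : semicircleDensity y = 0
            · simp [hy]
            · have hy2 : |y| ≤ 2 := abs_le_of_ρ_ne hy
              have : y ^ (2*p) ≤ 2 ^ (2*p) := by
                calc y ^ (2*p) ≤ |y ^ (2*p)| := le_abs_self _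
                _ = |y| ^ (2*p) := by rw [abs_pow]
                _ ≤ 2 ^ (2*p) := pow_le_pow_left₀ (abs_nonneg y) hy2 _
              exact mul_le_mul_of_nonneg_right this (ρ_nonneg y)
        _ = 2 ^ (2*p) := by
            rw [MeasureTheory.integral_const_mul, integral_ρ, mul_one]
    rw [m_even] at h1
    simpa using h1
  · positivity

lemma abs_m_le (k : ℕ) : |m k| ≤ 2 ^ k := by
  rw [abs_of_nonneg (m_nonneg k)]; exact m_le k

lemma m_rec (n : ℕ) : m (n+2) = ∑ i ∈ Finset.range (n+1), m i * m (n-i) := by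
  rcases Nat.even_or_odd n with ⟨p, hp⟩ | ⟨p, hp⟩
  · have hn : n = 2*p := by omega
    subst hn
    have hterm : ∀ i ∈ Finset.range (2*p+1), m i * m (2*p - i)
        = if Even i then ((catalan (i/2) : ℝ) * (catalan (p - i/2) : ℝ)) else 0 := by
      intro i hi
      rw [Finset.mem_range] at hi
      by_cases he : Even i
      · obtain ⟨a, ha⟩ := he
        have hia : i = 2*a := by omega
        subst hia
        have hd : (2*a)/2 = a := by omega
        rw [if_pos ⟨a, by ring⟩, hd]
        have h1 : 2*p - 2*a = 2*(p-a) := by omega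
        rw [h1, m_even, m_even]
      · rw [if_neg he]
        have h1 : i = 2*(i/2)+1 := by
          have := Nat.not_even_iff.mp he; omega
        rw [h1, m_odd, zero_mul]
    rw [Finset.sum_congr rfl hterm, sum_even_aux (fun a => (catalan a : ℝ) * (catalan (p-a) : ℝ))]
    rw [show 2*p+2 = 2*(p+1) from by ring, m_even]
    rw [catalan_succ p]
    push_cast
    rw [Fin.sum_univ_eq_sum_range (fun i => (catalan i : ℝ) * (catalan (p-i) : ℝ))]
  · have hn : n = 2*p+1 := by omega
    subst hn
    have h0 : m (2*p+1+2) = 0 := by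
      rw [show 2*p+1+2 = 2*(p+1)+1 from by ring, m_odd]
    rw [h0]
    symm
    apply Finset.sum_eq_zero
    intro i hi
    rw [Finset.mem_range] at hi
    rcases Nat.even_or_odd i with ⟨a, ha⟩ | ⟨a, ha⟩
    · have h1 : 2*p+1-i = 2*(p-a)+1 := by omega
      rw [h1, m_odd, mul_zero]
    · have h1 : i = 2*a+1 := by omega
      rw [h1, m_odd, zero_mul]


lemma exp_tsum (z : ℝ) : Real.exp z = ∑' n : ℕ, z ^ n / n.factorial := by
  rw [Real.exp_eq_exp_ℝ, NormedSpace.exp_eq_tsum_div]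

noncomputable def F (x : ℝ) : ℝ := ∫ y : ℝ, Real.exp (x * y) * semicircleDensity y

noncomputable def G (x : ℝ) : ℝ := ∫ y : ℝ, y * Real.exp (x * y) * semicircleDensity y

lemma norm_integral_aux (c : ℝ) (k : ℕ) :
    (∫ y : ℝ, ‖c * (y ^ k * semicircleDensity y)‖) ≤ |c| * 2 ^ k := by
  have h1 : Integrable (fun y : ℝ => ‖c * (y ^ k * semicircleDensity y)‖) :=
    (Integrable.const_mul (integrable_mul (continuous_pow k)) c).norm
  calc (∫ y : ℝ, ‖c * (y ^ k * semicircleDensity y)‖)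
      ≤ ∫ y : ℝ, (|c| * 2 ^ k) * semicircleDensity y := by
        apply integral_mono h1 (integrable_mul continuous_const)
        intro y
        simp only []
        by_cases hy : semicircleDensity y = 0
        · simp [hy, Real.norm_eq_abs, abs_mul]
        · have hy2 : |y| ≤ 2 := abs_le_of_ρ_ne hy
          have hρ := ρ_nonneg y
          rw [Real.norm_eq_abs, abs_mul, abs_mul, abs_pow, abs_of_nonneg hρ]
          have : |y| ^ k ≤ 2 ^ k := pow_le_pow_left₀ (abs_nonneg y) hy2 _
          calc |c| * (|y| ^ k * semicircleDensity y) ≤ |c| * (2 ^ k * semicircleDensity y) := by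
                apply mul_le_mul_of_nonneg_left _ (abs_nonneg c)
                exact mul_le_mul_of_nonneg_right this hρ
            _ = |c| * 2 ^ k * semicircleDensity y := by ring
    _ = |c| * 2 ^ k := by
        rw [MeasureTheory.integral_const_mul, integral_ρ, mul_one]

lemma summable_bound (x : ℝ) (j : ℕ) :
    Summable (fun n : ℕ => |x ^ n / n.factorial| * 2 ^ (n + j)) := by
  have hs : Summable (fun n : ℕ => (2:ℝ) ^ j * ((2 * |x|) ^ n / n.factorial)) :=
    (Real.summable_pow_div_factorial (2 * |x|)).mul_left _
  apply Summable.of_nonneg_of_le (fun n => by positivity) _ hs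
  intro n
  have h1 : |x ^ n / (n.factorial:ℝ)| = |x| ^ n / n.factorial := by
    rw [abs_div, abs_pow, Nat.abs_cast]
  rw [h1, mul_pow, pow_add]
  apply le_of_eq
  field_simp

lemma F_hasSum (x : ℝ) :
    HasSum (fun n : ℕ => m n * (x ^ n / n.factorial)) (F x) := by
  have h1 : ∀ n : ℕ, Integrable (fun y : ℝ => (x ^ n / n.factorial) * (y ^ n * semicircleDensity y)) :=
    fun n => Integrable.const_mul (integrable_mul (continuous_pow n)) _
  have h2 : Summable fun n : ℕ => ∫ y : ℝ, ‖(x ^ n / n.factorial) * (y ^ n * semicircleDensity y)‖ := by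
    apply Summable.of_nonneg_of_le (fun n => integral_nonneg (fun y => norm_nonneg _))
      (fun n => norm_integral_aux _ n)
    simpa using summable_bound x 0
  have := hasSum_integral_of_summable_integral_norm h1 h2
  have heq : (∫ y : ℝ, ∑' n : ℕ, (x ^ n / n.factorial) * (y ^ n * semicircleDensity y)) = F x := by
    unfold F
    congr 1
    funext y
    rw [show (fun n : ℕ => (x ^ n / n.factorial) * (y ^ n * semicircleDensity y))
      = fun n : ℕ => ((x * y) ^ n / n.factorial) * semicircleDensity y from
      funext fun n => by rw [mul_pow]; ring]
    rw [tsum_mul_right, ← exp_tsum]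
  rw [heq] at this
  have heq2 : (fun n : ℕ => ∫ y : ℝ, (x ^ n / n.factorial) * (y ^ n * semicircleDensity y))
      = fun n : ℕ => m n * (x ^ n / n.factorial) := by
    funext n
    rw [MeasureTheory.integral_const_mul]
    unfold m
    ring
  rwa [heq2] at this

lemma G_hasSum (x : ℝ) :
    HasSum (fun n : ℕ => m (n+1) * (x ^ n / n.factorial)) (G x) := by
  have h1 : ∀ n : ℕ, Integrable (fun y : ℝ => (x ^ n / n.factorial) * (y ^ (n+1) * semicircleDensity y)) :=
    fun n => Integrable.const_mul (integrable_mul (continuous_pow (n+1))) _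
  have h2 : Summable fun n : ℕ => ∫ y : ℝ, ‖(x ^ n / n.factorial) * (y ^ (n+1) * semicircleDensity y)‖ := by
    apply Summable.of_nonneg_of_le (fun n => integral_nonneg (fun y => norm_nonneg _))
      (fun n => norm_integral_aux _ (n+1))
    exact summable_bound x 1
  have := hasSum_integral_of_summable_integral_norm h1 h2
  have heq : (∫ y : ℝ, ∑' n : ℕ, (x ^ n / n.factorial) * (y ^ (n+1) * semicircleDensity y)) = G x := by
    unfold G
    congr 1
    funext y
    rw [show (fun n : ℕ => (x ^ n / n.factorial) * (y ^ (n+1) * semicircleDensity y))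
      = fun n : ℕ => ((x * y) ^ n / n.factorial) * (y * semicircleDensity y) from
      funext fun n => by rw [mul_pow]; ring]
    rw [tsum_mul_right, ← exp_tsum]
    ring
  rw [heq] at this
  have heq2 : (fun n : ℕ => ∫ y : ℝ, (x ^ n / n.factorial) * (y ^ (n+1) * semicircleDensity y))
      = fun n : ℕ => m (n+1) * (x ^ n / n.factorial) := by
    funext n
    rw [MeasureTheory.integral_const_mul]
    unfold m
    ring
  rwa [heq2] at this

lemma F_eq (x : ℝ) : F x = ∑' n : ℕ, m n * (x ^ n / n.factorial) := (F_hasSum x).tsum_eq.symm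

lemma G_eq (x : ℝ) : G x = ∑' n : ℕ, m (n+1) * (x ^ n / n.factorial) := (G_hasSum x).tsum_eq.symm

lemma F_zero : F 0 = 1 := by
  unfold F
  simp only [zero_mul, Real.exp_zero, one_mul]
  exact integral_ρ


lemma F_deriv (x₀ : ℝ) : HasDerivAt F (G x₀) x₀ := by
  have key := hasDerivAt_integral_of_dominated_loc_of_deriv_le (μ := (volume : Measure ℝ))
    (F := fun x y => Real.exp (x * y) * semicircleDensity y)
    (F' := fun x y => y * Real.exp (x * y) * semicircleDensity y)
    (x₀ := x₀)
    (bound := fun y => (2 * Real.exp (2 * (|x₀| + 1))) * semicircleDensity y)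
    (Metric.ball_mem_nhds x₀ one_pos)
    (Filter.Eventually.of_forall fun x =>
      (integrable_mul (Real.continuous_exp.comp (continuous_const.mul continuous_id))).aestronglyMeasurable)
    (integrable_mul (Real.continuous_exp.comp (continuous_const.mul continuous_id)))
    (integrable_mul ((continuous_id.mul (Real.continuous_exp.comp (continuous_const.mul continuous_id))))).aestronglyMeasurable
    (Filter.Eventually.of_forall fun y => ?_)
    (integrable_mul continuous_const)
    (Filter.Eventually.of_forall fun y x _ => ?_)
  · exact key.2
  · -- bound
    intro x hx
    by_cases hy : semicircleDensity y = 0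
    · simp [hy]
    · have hy2 : |y| ≤ 2 := abs_le_of_ρ_ne hy
      have hρ := ρ_nonneg y
      have hx1 : |x| ≤ |x₀| + 1 := by
        have := mem_ball_iff_norm.mp hx
        have h2 : |x - x₀| ≤ 1 := le_of_lt this
        calc |x| = |x₀ + (x - x₀)| := by ring_nf
          _ ≤ |x₀| + |x - x₀| := abs_add_le _ _
          _ ≤ |x₀| + 1 := by linarith
      have hexp : Real.exp (x * y) ≤ Real.exp (2 * (|x₀| + 1)) := by
        apply Real.exp_le_exp.mpr
        calc x * y ≤ |x * y| := le_abs_self _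
          _ = |x| * |y| := abs_mul _ _
          _ ≤ (|x₀| + 1) * 2 := by
            apply mul_le_mul hx1 hy2 (abs_nonneg y) (by positivity)
          _ = 2 * (|x₀| + 1) := by ring
      rw [Real.norm_eq_abs, abs_mul, abs_mul, abs_of_nonneg hρ, abs_of_nonneg (Real.exp_pos _).le]
      calc |y| * Real.exp (x * y) * semicircleDensity y
          ≤ 2 * Real.exp (2 * (|x₀| + 1)) * semicircleDensity y := by
            apply mul_le_mul_of_nonneg_right _ hρ
            exact mul_le_mul hy2 hexp (Real.exp_pos _).le (by norm_num)
        _ = 2 * Real.exp (2 * (|x₀| + 1)) * semicircleDensity y := by ring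
  · -- differentiability
    have h1 : HasDerivAt (fun x => Real.exp (x * y)) (Real.exp (x * y) * y) x :=
      (hasDerivAt_mul_const y).exp
    have h2 := h1.mul_const (semicircleDensity y)
    convert h2 using 1
    · rfl
    ring

lemma F_cont : Continuous F :=
  continuous_iff_continuousAt.mpr fun x => (F_deriv x).continuousAt

lemma beta_int (i : ℕ) : ∀ (j : ℕ) (x : ℝ),
    (∫ t in (0:ℝ)..x, (x - t) ^ i * t ^ j)
      = ((i.factorial : ℝ) * j.factorial / (i + j + 1).factorial) * x ^ (i + j + 1) := by
  induction i with
  | zero =>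
    intro j x
    simp only [pow_zero, one_mul, Nat.factorial_zero, Nat.cast_one, zero_add]
    rw [integral_pow]
    have : ((j+1).factorial : ℝ) = (j+1) * j.factorial := by
      exact_mod_cast Nat.factorial_succ j
    rw [this]
    push_cast
    have hj : ((j:ℝ) + 1) ≠ 0 := by positivity
    have hjf : (j.factorial : ℝ) ≠ 0 := by positivity
    field_simp
    ring
  | succ i ih =>
    intro j x
    have hu : ∀ t ∈ Set.uIcc (0:ℝ) x, HasDerivAt (fun t => (x - t) ^ (i+1))
        ((↑(i+1) * (x - t) ^ i) * (-1)) t := by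
      intro t _
      exact ((hasDerivAt_id t).const_sub x).pow (i+1)
    have hv : ∀ t ∈ Set.uIcc (0:ℝ) x, HasDerivAt (fun t : ℝ => t ^ (j+1) / ((j:ℝ)+1)) (t ^ j) t := by
      intro t _
      have hd := (hasDerivAt_pow (j+1) t).div_const ((j:ℝ)+1)
      have h0 : ((j+1:ℕ):ℝ) * t ^ (j+1-1) / ((j:ℝ)+1) = t ^ j := by
        have hj : ((j:ℝ) + 1) ≠ 0 := by positivity
        push_cast [Nat.add_sub_cancel]
        field_simp
      rwa [h0] at hd
    have hparts := intervalIntegral.integral_mul_deriv_eq_deriv_mul hu hv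
      (((continuous_const.mul ((continuous_const.sub continuous_id).pow i)).mul continuous_const).intervalIntegrable 0 x)
      ((continuous_pow j).intervalIntegrable 0 x)
    rw [hparts]
    simp only [sub_self, zero_pow (Nat.succ_ne_zero i), zero_mul, sub_zero,
      ne_eq, zero_div, mul_zero, zero_pow (Nat.succ_ne_zero j)]
    have hswap : (∫ t in (0:ℝ)..x, (↑(i+1) * (x - t) ^ i * -1) * (t ^ (j+1) / (↑j+1)))
        = (↑(i+1) * (-1) / ((j:ℝ)+1)) * ∫ t in (0:ℝ)..x, (x - t) ^ i * t ^ (j+1) := by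
      rw [← intervalIntegral.integral_const_mul]
      apply intervalIntegral.integral_congr
      intro t _
      push_cast
      ring
    rw [hswap, ih (j+1) x]
    have e1 : (i + (j+1) + 1) = (i + 1) + j + 1 := by ring
    rw [e1]
    have hfacts : ((i+1+j+1).factorial : ℝ) ≠ 0 := by positivity
    have hj : ((j:ℝ)+1) ≠ 0 := by positivity
    have hfi : ((i+1).factorial : ℝ) = (i+1) * i.factorial := by exact_mod_cast Nat.factorial_succ i
    have hfj : ((j+1).factorial : ℝ) = (j+1) * j.factorial := by exact_mod_cast Nat.factorial_succ j
    rw [hfi, hfj]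
    push_cast
    field_simp
    ring


lemma F_term_summable_norm (z : ℝ) :
    Summable fun n : ℕ => ‖m n * (z ^ n / n.factorial)‖ := by
  have hs : Summable (fun n : ℕ => (2 * |z|) ^ n / n.factorial) :=
    Real.summable_pow_div_factorial (2 * |z|)
  apply Summable.of_nonneg_of_le (fun n => norm_nonneg _) _ hs
  intro n
  rw [Real.norm_eq_abs, abs_mul, abs_div, abs_pow, Nat.abs_cast, mul_pow]
  calc |m n| * (|z| ^ n / n.factorial) ≤ 2 ^ n * (|z| ^ n / n.factorial) := by
        apply mul_le_mul_of_nonneg_right (abs_m_le n) (by positivity)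
    _ = 2 ^ n * |z| ^ n / n.factorial := by ring

lemma antidiagonal_factorial_sum (n : ℕ) :
    ∑ p ∈ Finset.HasAntidiagonal.antidiagonal n, (1:ℝ) / (p.1.factorial * p.2.factorial) = 2 ^ n / n.factorial := by
  rw [Finset.Nat.sum_antidiagonal_eq_sum_range_succ_mk]
  have h : ∀ i ∈ Finset.range (n+1), (1:ℝ) / (i.factorial * (n-i).factorial)
      = (n.choose i : ℝ) / n.factorial := by
    intro i hi
    rw [Finset.mem_range] at hi
    have key : n.choose i * i.factorial * (n-i).factorial = n.factorial :=
      Nat.choose_mul_factorial_mul_factorial (by omega)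
    have keyR : (n.choose i : ℝ) * i.factorial * (n-i).factorial = n.factorial := by
      exact_mod_cast key
    have h1 : (i.factorial : ℝ) ≠ 0 := by positivity
    have h2 : ((n-i).factorial : ℝ) ≠ 0 := by positivity
    have h3 : (n.factorial : ℝ) ≠ 0 := by positivity
    field_simp
    linarith [keyR]
  rw [Finset.sum_congr rfl h, ← Finset.sum_div]
  congr 1
  exact_mod_cast Nat.sum_range_choose n

lemma conv_eq (x : ℝ) (hx : 0 ≤ x) : (∫ t in (0:ℝ)..x, F (x - t) * F t) = G x := by
  classical
  set c : ℕ → ℝ → ℝ := fun n t => ∑ p ∈ Finset.HasAntidiagonal.antidiagonal n,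
    (m p.1 * ((x - t) ^ p.1 / p.1.factorial)) * (m p.2 * (t ^ p.2 / p.2.factorial)) with hc
  -- Step A : pointwise Cauchy product
  have hA : ∀ t : ℝ, F (x - t) * F t = ∑' n, c n t := by
    intro t
    rw [F_eq (x - t), F_eq t]
    exact tsum_mul_tsum_eq_tsum_sum_antidiagonal_of_summable_norm
      (F_term_summable_norm (x - t)) (F_term_summable_norm t)
  -- continuity of c n
  have hcont : ∀ n, Continuous (c n) := by
    intro n
    apply continuous_finset_sum
    intro p _
    exact ((continuous_const.mul (((continuous_const.sub continuous_id).pow p.1).div_const _)).mul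
      (continuous_const.mul ((continuous_pow p.2).div_const _)))
  -- uniform bound on Ioc 0 x
  have hbound : ∀ n, ∀ t ∈ Set.Ioc (0:ℝ) x, |c n t| ≤ (4 * x) ^ n / n.factorial := by
    intro n t ht
    have ht1 : 0 ≤ t := le_of_lt ht.1
    have ht2 : t ≤ x := ht.2
    calc |c n t| ≤ ∑ p ∈ Finset.HasAntidiagonal.antidiagonal n,
        |(m p.1 * ((x - t) ^ p.1 / p.1.factorial)) * (m p.2 * (t ^ p.2 / p.2.factorial))| :=
          Finset.abs_sum_le_sum_abs _ _
      _ ≤ ∑ p ∈ Finset.HasAntidiagonal.antidiagonal n, (2*x) ^ n * (1 / (p.1.factorial * p.2.factorial)) := by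
          apply Finset.sum_le_sum
          intro p hp
          rw [Finset.HasAntidiagonal.mem_antidiagonal] at hp
          have hxt : |x - t| ≤ x := by rw [abs_le]; constructor <;> linarith
          have htx : |t| ≤ x := by rw [abs_le]; constructor <;> linarith
          have e1 : |m p.1 * ((x - t) ^ p.1 / p.1.factorial) * (m p.2 * (t ^ p.2 / p.2.factorial))|
              = (|m p.1| * |m p.2|) * ((|x - t| ^ p.1 * |t| ^ p.2) / (p.1.factorial * p.2.factorial)) := by
            rw [abs_mul, abs_mul, abs_mul, abs_div, abs_div, abs_pow, abs_pow,
              Nat.abs_cast, Nat.abs_cast]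
            ring
          rw [e1]
          have b1 : |m p.1| * |m p.2| ≤ 2 ^ p.1 * 2 ^ p.2 :=
            mul_le_mul (abs_m_le _) (abs_m_le _) (abs_nonneg _) (by positivity)
          have b3 : (|x - t| ^ p.1 * |t| ^ p.2) / ((p.1.factorial:ℝ) * p.2.factorial)
              ≤ (x ^ p.1 * x ^ p.2) / ((p.1.factorial:ℝ) * p.2.factorial) := by
            gcongr
          calc (|m p.1| * |m p.2|) * ((|x - t| ^ p.1 * |t| ^ p.2) / (p.1.factorial * p.2.factorial))
              ≤ (2 ^ p.1 * 2 ^ p.2) * ((x ^ p.1 * x ^ p.2) / (p.1.factorial * p.2.factorial)) := by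
                apply mul_le_mul b1 b3 (by positivity) (by positivity)
            _ = (2*x) ^ n * (1 / (p.1.factorial * p.2.factorial)) := by
                rw [← hp, pow_add (2*x), mul_pow, mul_pow]
                ring
      _ = (4 * x) ^ n / n.factorial := by
          rw [← Finset.mul_sum, antidiagonal_factorial_sum,
            show (4:ℝ) * x = 2 * (2 * x) from by ring, mul_pow, mul_pow]
          ring
  -- Step B : swap sum and integral
  have hint : ∀ n, IntegrableOn (c n) (Set.Ioc 0 x) := fun n => (hcont n).integrableOn_Ioc
  have hxsum : Summable (fun n : ℕ => x * ((4*x) ^ n / n.factorial)) :=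
    (Real.summable_pow_div_factorial (4*x)).mul_left x
  have hnorm : ∀ n, (∫ t in Set.Ioc (0:ℝ) x, ‖c n t‖) ≤ x * ((4*x) ^ n / n.factorial) := by
    intro n
    calc (∫ t in Set.Ioc (0:ℝ) x, ‖c n t‖) ≤ ∫ _ in Set.Ioc (0:ℝ) x, (4*x) ^ n / n.factorial := by
          apply setIntegral_mono_on (hint n).norm
            (integrableOn_const measure_Ioc_lt_top.ne) measurableSet_Ioc
          intro t ht
          rw [Real.norm_eq_abs]
          exact hbound n t ht
      _ = x * ((4*x) ^ n / n.factorial) := by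
          rw [setIntegral_const, Measure.real, Real.volume_Ioc, smul_eq_mul]
          rw [ENNReal.toReal_ofReal (by linarith : (0:ℝ) ≤ x - 0)]
          ring
  have hsum : Summable fun n : ℕ => ∫ t in Set.Ioc (0:ℝ) x, ‖c n t‖ :=
    Summable.of_nonneg_of_le (fun n => integral_nonneg fun t => norm_nonneg _) hnorm hxsum
  have hswap := MeasureTheory.integral_tsum_of_summable_integral_norm hint hsum
  -- Step C : term-by-term integral
  have hterm : ∀ n : ℕ, (∫ t in (0:ℝ)..x, c n t)
      = m (n+2) * (x ^ (n+1) / (n+1).factorial) := by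
    intro n
    have hsplit : (∫ t in (0:ℝ)..x, c n t) = ∑ p ∈ Finset.HasAntidiagonal.antidiagonal n,
        ∫ t in (0:ℝ)..x, (m p.1 * ((x - t) ^ p.1 / p.1.factorial)) * (m p.2 * (t ^ p.2 / p.2.factorial)) := by
      rw [hc]
      apply intervalIntegral.integral_finset_sum
      intro p _
      exact ((continuous_const.mul (((continuous_const.sub continuous_id).pow p.1).div_const _)).mul
        (continuous_const.mul ((continuous_pow p.2).div_const _))).intervalIntegrable _ _
    rw [hsplit]
    have hterm1 : ∀ p ∈ Finset.HasAntidiagonal.antidiagonal n,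
        (∫ t in (0:ℝ)..x, (m p.1 * ((x - t) ^ p.1 / p.1.factorial)) * (m p.2 * (t ^ p.2 / p.2.factorial)))
          = (m p.1 * m p.2) * (x ^ (n+1) / (n+1).factorial) := by
      intro p hp
      rw [Finset.HasAntidiagonal.mem_antidiagonal] at hp
      have hre : (∫ t in (0:ℝ)..x, (m p.1 * ((x - t) ^ p.1 / p.1.factorial)) * (m p.2 * (t ^ p.2 / p.2.factorial)))
          = (m p.1 * m p.2 / (p.1.factorial * p.2.factorial)) * ∫ t in (0:ℝ)..x, (x - t) ^ p.1 * t ^ p.2 := by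
        rw [← intervalIntegral.integral_const_mul]
        apply intervalIntegral.integral_congr
        intro t _
        ring
      rw [hre, beta_int p.1 p.2 x]
      have h1 : (p.1.factorial : ℝ) ≠ 0 := by positivity
      have h2 : (p.2.factorial : ℝ) ≠ 0 := by positivity
      have h3 : ((p.1 + p.2 + 1).factorial : ℝ) ≠ 0 := by positivity
      rw [show p.1 + p.2 + 1 = n + 1 from by omega]
      field_simp
    rw [Finset.sum_congr rfl hterm1, ← Finset.sum_mul]
    congr 1
    rw [Finset.Nat.sum_antidiagonal_eq_sum_range_succ_mk, ← m_rec n]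
  -- Step D : assemble
  have hL : (∫ t in (0:ℝ)..x, F (x - t) * F t)
      = ∑' n : ℕ, m (n+2) * (x ^ (n+1) / (n+1).factorial) := by
    have e1 : (∫ t in (0:ℝ)..x, F (x - t) * F t) = ∫ t in Set.Ioc (0:ℝ) x, ∑' n, c n t := by
      rw [intervalIntegral.integral_of_le hx]
      apply setIntegral_congr_fun measurableSet_Ioc
      intro t _
      exact hA t
    rw [e1, ← hswap]
    apply tsum_congr
    intro n
    rw [← intervalIntegral.integral_of_le hx, hterm n]
  rw [hL, G_eq x]
  rw [Summable.tsum_eq_zero_add (G_hasSum x).summable]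
  have hm1 : m 1 = 0 := by simpa using m_odd 0
  simp [hm1]

end SCA

/-- For the decoupled kernel `k(t,s) = h(t)h(s)`, the function
`H(s,t) = E[exp(S ∫_t^s h(u) du)]` (expectation over a semicircular `S`) solves the
Kraichnan equation with boundary condition `H(t,t) = 1`. -/
theorem decoupled_kernel_solution (h : ℝ → ℝ) (hc : Continuous h) (hnn : ∀ u, 0 ≤ h u)
    (H : ℝ → ℝ → ℝ)
    (hH : ∀ s t, H s t = ∫ y : ℝ, Real.exp ((∫ u in t..s, h u) * y) * semicircleDensity y) :
    (∀ t, H t t = 1) ∧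
    ∀ t s, 0 ≤ t → t ≤ s →
      HasDerivAt (fun r => H r t) (∫ u in t..s, H s u * H u t * (h s * h u)) s := by
  constructor
  · intro t
    rw [hH t t]
    simp only [intervalIntegral.integral_same, zero_mul, Real.exp_zero, one_mul]
    exact SCA.integral_ρ
  · intro t s _ hts
    set a : ℝ → ℝ := fun r => ∫ u in t..r, h u with ha
    have ha' : ∀ r : ℝ, HasDerivAt a (h r) r := by
      intro r
      exact intervalIntegral.integral_hasDerivAt_right (hc.intervalIntegrable t r)
        (hc.stronglyMeasurable.stronglyMeasurableAtFilter) hc.continuousAt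
    have hfun : (fun r => H r t) = (fun r => SCA.F (a r)) := funext fun r => (hH r t).trans rfl
    have hcomp : HasDerivAt (fun r => SCA.F (a r)) (SCA.G (a s) * h s) s :=
      (SCA.F_deriv (a s)).comp s (ha' s)
    have hat : a t = 0 := intervalIntegral.integral_same
    have has_nonneg : 0 ≤ a s := intervalIntegral.integral_nonneg hts (fun u _ => hnn u)
    have hHsu : ∀ u : ℝ, H s u = SCA.F (a s - a u) := by
      intro u
      rw [hH s u]
      have hsub : a s - a u = ∫ x in u..s, h x :=
        intervalIntegral.integral_interval_sub_left (hc.intervalIntegrable t s)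
          (hc.intervalIntegrable t u)
      rw [hsub]
      rfl
    have hHut : ∀ u : ℝ, H u t = SCA.F (a u) := fun u => (hH u t).trans rfl
    have hval : (∫ u in t..s, H s u * H u t * (h s * h u)) = SCA.G (a s) * h s := by
      have step1 : (∫ u in t..s, H s u * H u t * (h s * h u))
          = h s * ∫ u in t..s, h u • (((fun y => SCA.F (a s - y) * SCA.F y) ∘ a) u) := by
        rw [← intervalIntegral.integral_const_mul]
        apply intervalIntegral.integral_congr
        intro u _
        simp only [hHsu u, hHut u, Function.comp_apply, smul_eq_mul]
        ring
      have step2 : (∫ u in t..s, h u • (((fun y => SCA.F (a s - y) * SCA.F y) ∘ a) u))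
          = ∫ y in (a t)..(a s), SCA.F (a s - y) * SCA.F y := by
        apply intervalIntegral.integral_comp_smul_deriv (fun u _ => ha' u) hc.continuousOn
        exact (SCA.F_cont.comp (continuous_const.sub continuous_id)).mul SCA.F_cont
      rw [step1, step2, hat, SCA.conv_eq (a s) has_nonneg]
      ring
    rw [hfun, hval]
    exact hcomp
end

section
/- For the constant kernel k ≡ C > 0, the solution H of the Kraichnan equation satisfies lim_{x→∞} (1/x) log H(x) = 2√C, where H(x) := H(s,t) for s−t = x (the solution is stationary). -/
open MeasureTheory

set_option maxHeartbeats 1000000 in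
/-- For the constant kernel `k ≡ C > 0`, the stationary solution
`H(x) = E[exp(√C x S)]` of the Kraichnan equation has Lyapunov exponent
`lim_{x→∞} (1/x) log H(x) = 2√C`. -/
theorem const_kernel_lyapunov (C : ℝ) (hC : 0 < C) (H : ℝ → ℝ)
    (hH : ∀ x, H x = ∫ y : ℝ, Real.exp (Real.sqrt C * x * y) * semicircleDensity y) :
    Filter.Tendsto (fun x => Real.log (H x) / x) Filter.atTop
      (nhds (2 * Real.sqrt C)) := by
  set a := Real.sqrt C with ha_def
  have ha : 0 < a := Real.sqrt_pos.mpr hC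
  set c : ℝ := 1 / (2 * Real.pi) with hc_def
  have hπ : 0 < Real.pi := Real.pi_pos
  have hcpos : 0 < c := by positivity
  -- rewrite H as a set integral
  have hHx : ∀ x, H x =
      ∫ y in Set.Icc (-2:ℝ) 2, Real.exp (a*x*y) * (c * Real.sqrt (4 - y^2)) := by
    intro x
    rw [hH x, ← MeasureTheory.integral_indicator measurableSet_Icc]
    congr 1
    ext y
    by_cases hy : y ∈ Set.Icc (-2:ℝ) 2
    · simp only [semicircleDensity, Set.indicator, hy, if_pos, hc_def]
    · simp [semicircleDensity, Set.indicator, hy]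
  have hcont : ∀ x : ℝ, Continuous
      (fun y => Real.exp (a*x*y) * (c * Real.sqrt (4 - y^2))) := by
    intro x; fun_prop
  have hcont0 : Continuous (fun y : ℝ => c * Real.sqrt (4 - y^2)) := by fun_prop
  have hnn : ∀ x y : ℝ, 0 ≤ Real.exp (a*x*y) * (c * Real.sqrt (4 - y^2)) := by
    intro x y; positivity
  set M : ℝ := ∫ y in Set.Icc (-2:ℝ) 2, c * Real.sqrt (4 - y^2) with hM_def
  rw [Metric.tendsto_atTop]
  intro ε hε
  set δ : ℝ := min 1 (ε/(2*a)) with hδ_def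
  have hδ0 : 0 < δ := lt_min one_pos (by positivity)
  have hδ1 : δ ≤ 1 := min_le_left _ _
  have hδ2 : a * δ ≤ ε/2 := by
    calc a * δ ≤ a * (ε/(2*a)) := by
          exact mul_le_mul_of_nonneg_left (min_le_right _ _) ha.le
      _ = ε/2 := by field_simp
  set m : ℝ := ∫ y in Set.Icc (2-δ:ℝ) 2, c * Real.sqrt (4 - y^2) with hm_def
  have hsub : Set.Icc (2-δ:ℝ) 2 ⊆ Set.Icc (-2:ℝ) 2 :=
    Set.Icc_subset_Icc (by linarith) le_rfl
  have hm_pos : 0 < m := by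
    rw [hm_def, MeasureTheory.integral_Icc_eq_integral_Ioc,
      ← intervalIntegral.integral_of_le (by linarith)]
    apply intervalIntegral.intervalIntegral_pos_of_pos_on
    · exact hcont0.intervalIntegrable _ _
    · intro y hy
      have h1 : (1:ℝ) ≤ 2 - δ := by linarith
      have hy1 : 1 < y := lt_of_le_of_lt h1 hy.1
      have hy2 : y < 2 := hy.2
      have : 0 < 4 - y^2 := by nlinarith
      exact mul_pos hcpos (Real.sqrt_pos.mpr this)
    · linarith
  have hmM : m ≤ M := by
    apply MeasureTheory.setIntegral_mono_set
    · exact hcont0.continuousOn.integrableOn_compact isCompact_Icc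
    · exact Filter.Eventually.of_forall fun y => by positivity
    · exact hsub.eventuallyLE
  have hM_pos : 0 < M := lt_of_lt_of_le hm_pos hmM
  -- bounds on H for x ≥ 0
  have hub : ∀ x : ℝ, 0 ≤ x → H x ≤ Real.exp (2*a*x) * M := by
    intro x hx
    rw [hHx x, hM_def, ← MeasureTheory.integral_const_mul]
    apply MeasureTheory.setIntegral_mono_on
    · exact (hcont x).continuousOn.integrableOn_compact isCompact_Icc
    · exact (continuous_const.mul hcont0).continuousOn.integrableOn_compact isCompact_Icc
    · exact measurableSet_Icc
    · intro y hy
      have : a*x*y ≤ 2*a*x := by nlinarith [hy.2, mul_nonneg ha.le hx]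
      have := Real.exp_le_exp.mpr this
      have hnn2 : 0 ≤ c * Real.sqrt (4 - y^2) := by positivity
      nlinarith
  have hlb : ∀ x : ℝ, 0 ≤ x → Real.exp (a*(2-δ)*x) * m ≤ H x := by
    intro x hx
    rw [hHx x]
    calc Real.exp (a*(2-δ)*x) * m
        ≤ ∫ y in Set.Icc (2-δ:ℝ) 2, Real.exp (a*x*y) * (c * Real.sqrt (4 - y^2)) := by
          rw [hm_def, ← MeasureTheory.integral_const_mul]
          apply MeasureTheory.setIntegral_mono_on
          · exact (continuous_const.mul hcont0).continuousOn.integrableOn_compact isCompact_Icc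
          · exact (hcont x).continuousOn.integrableOn_compact isCompact_Icc
          · exact measurableSet_Icc
          · intro y hy
            have : a*(2-δ)*x ≤ a*x*y := by nlinarith [hy.1, mul_nonneg ha.le hx]
            have := Real.exp_le_exp.mpr this
            have hnn2 : 0 ≤ c * Real.sqrt (4 - y^2) := by positivity
            nlinarith
      _ ≤ _ := by
          apply MeasureTheory.setIntegral_mono_set
          · exact (hcont x).continuousOn.integrableOn_compact isCompact_Icc
          · exact Filter.Eventually.of_forall fun y => hnn x y
          · exact hsub.eventuallyLE
  refine ⟨max 1 (1 + 2*(|Real.log M| + |Real.log m|)/ε), fun x hx => ?_⟩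
  have hx1 : (1:ℝ) ≤ x := le_trans (le_max_left _ _) hx
  have hx0 : 0 < x := by linarith
  have hx2 : 2*(|Real.log M| + |Real.log m|)/ε < x := by
    have := le_trans (le_max_right _ _) hx; linarith
  have hxε : |Real.log M| + |Real.log m| < ε * x / 2 := by
    rw [div_lt_iff₀ hε] at hx2; linarith
  have hHpos : 0 < H x := lt_of_lt_of_le (by positivity) (hlb x hx0.le)
  have hlog_ub : Real.log (H x) ≤ 2*a*x + Real.log M := by
    calc Real.log (H x) ≤ Real.log (Real.exp (2*a*x) * M) :=
          Real.log_le_log hHpos (hub x hx0.le)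
      _ = 2*a*x + Real.log M := by
          rw [Real.log_mul (Real.exp_ne_zero _) hM_pos.ne', Real.log_exp]
  have hlog_lb : a*(2-δ)*x + Real.log m ≤ Real.log (H x) := by
    calc a*(2-δ)*x + Real.log m
        = Real.log (Real.exp (a*(2-δ)*x) * m) := by
          rw [Real.log_mul (Real.exp_ne_zero _) hm_pos.ne', Real.log_exp]
      _ ≤ Real.log (H x) := Real.log_le_log (by positivity) (hlb x hx0.le)
  rw [Real.dist_eq, abs_lt]
  have hMx : |Real.log M| / x < ε / 2 := by
    rw [div_lt_iff₀ hx0]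
    calc |Real.log M| ≤ |Real.log M| + |Real.log m| := le_add_of_nonneg_right (abs_nonneg _)
      _ < ε * x / 2 := hxε
      _ = ε / 2 * x := by ring
  have hmx : |Real.log m| / x < ε / 2 := by
    rw [div_lt_iff₀ hx0]
    calc |Real.log m| ≤ |Real.log M| + |Real.log m| := le_add_of_nonneg_left (abs_nonneg _)
      _ < ε * x / 2 := hxε
      _ = ε / 2 * x := by ring
  constructor
  · -- -ε < log H x / x - 2a
    have h1 : (2*a - a*δ) + Real.log m / x ≤ Real.log (H x) / x := by
      rw [le_div_iff₀ hx0]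
      have hcan : Real.log m / x * x = Real.log m := div_mul_cancel₀ _ hx0.ne'
      nlinarith [hlog_lb]
    have h2 : -(|Real.log m|) / x ≤ Real.log m / x := by
      gcongr
      · exact neg_abs_le _
    have h3 : -(|Real.log m|) / x = -(|Real.log m| / x) := by ring
    linarith [h1, h2, hmx, hδ2]
  · have h1 : Real.log (H x) / x ≤ 2*a + Real.log M / x := by
      rw [div_le_iff₀ hx0]
      have hcan : Real.log M / x * x = Real.log M := div_mul_cancel₀ _ hx0.ne'
      nlinarith [hlog_ub]
    have h4 : Real.log M / x ≤ |Real.log M| / x :=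
      by gcongr; exact le_abs_self _
    linarith
end

section
/- For the exponential generating function identity: Σ_{n≥0} C_n x^{2n}/(2n)! = (1/(2π)) ∫_{−2}^{2} e^{xy} √(4−y²) dy for all real x, where C_n is the n-th Catalan number. -/
open MeasureTheory Real intervalIntegral Set

namespace CatalanEGF

lemma cat_rec (n : ℕ) : (n+2) * catalan (n+1) = 2 * (2*n+1) * catalan n := by
  apply Nat.eq_of_mul_eq_mul_left (show 0 < n+1 by omega)
  calc (n+1) * ((n+2) * catalan (n+1)) = (n+1) * ((n+1+1) * catalan (n+1)) := by ring
  _ = (n+1) * Nat.centralBinom (n+1) := by rw [succ_mul_catalan_eq_centralBinom]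
  _ = 2 * (2*n+1) * Nat.centralBinom n := Nat.succ_mul_centralBinom_succ n
  _ = 2 * (2*n+1) * ((n+1) * catalan n) := by rw [succ_mul_catalan_eq_centralBinom]
  _ = (n+1) * (2*(2*n+1)*catalan n) := by ring

noncomputable def T (n : ℕ) : ℝ := ∫ θ in (-(π/2))..(π/2), Real.sin θ ^ (2*n)

lemma T_rec (n : ℕ) : T (n+1) = (2*n+1)/(2*n+2) * T n := by
  have h := integral_sin_pow (a := -(π/2)) (b := π/2) (2*n)
  have h2 : 2*(n+1) = 2*n + 2 := by ring
  rw [T, T, h2, h]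
  simp [Real.cos_pi_div_two]

lemma T_val (n : ℕ) : T n = π * ((n+1) * catalan n) / 4^n := by
  induction n with
  | zero => simp [T]
  | succ n ih =>
    rw [T_rec, ih]
    have hc : ((n:ℝ)+1+1) * catalan (n+1) = 2 * (2*n+1) * catalan n := by
      have := cat_rec n
      have : ((n+2) * catalan (n+1) : ℝ) = (2 * (2*n+1) * catalan n : ℕ) := by
        exact_mod_cast congrArg (Nat.cast : ℕ → ℝ) this
      push_cast at this ⊢
      linarith
    push_cast
    rw [div_mul_div_comm]
    rw [show ((n:ℝ)+1+1) * (catalan (n+1) : ℝ) = 2 * (2*(n:ℝ)+1) * catalan n from hc]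
    have h4 : (4:ℝ)^(n+1) = 4 * 4^n := by ring
    rw [h4]
    field_simp
    ring

lemma moment_sub (n : ℕ) :
    (∫ y in (-2:ℝ)..2, y^(2*n) * Real.sqrt (4 - y^2))
      = 4^(n+1) * (T n - T (n+1)) := by
  have hg : Continuous (fun y : ℝ => y^(2*n) * Real.sqrt (4 - y^2)) := by fun_prop
  have hd : ∀ θ ∈ uIcc (-(π/2)) (π/2),
      HasDerivAt (fun θ => 2 * Real.sin θ) (2 * Real.cos θ) θ := fun θ _ =>
    (Real.hasDerivAt_sin θ).const_mul 2
  have hc : ContinuousOn (fun θ => 2 * Real.cos θ) (uIcc (-(π/2)) (π/2)) := by fun_prop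
  have hsub := intervalIntegral.integral_comp_smul_deriv hd hc hg
  have h2 : (2:ℝ) * Real.sin (π/2) = 2 := by simp
  have h2' : (2:ℝ) * Real.sin (-(π/2)) = -2 := by simp
  rw [h2, h2'] at hsub
  rw [← hsub]
  have hle : -(π/2) ≤ π/2 := by
    have := Real.pi_pos; linarith
  have hIcc : uIcc (-(π/2)) (π/2) = Icc (-(π/2)) (π/2) := uIcc_of_le hle
  have hcong : ∀ θ ∈ uIcc (-(π/2)) (π/2),
      (fun θ => (2 * Real.cos θ) •
        ((fun y : ℝ => y^(2*n) * Real.sqrt (4 - y^2)) ∘ (fun θ => 2 * Real.sin θ)) θ) θ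
      = 4^(n+1) * (Real.sin θ ^ (2*n) - Real.sin θ ^ (2*(n+1))) := by
    intro θ hθ
    rw [hIcc] at hθ
    have hcos : 0 ≤ Real.cos θ := Real.cos_nonneg_of_mem_Icc hθ
    have hs : Real.sqrt (4 - (2 * Real.sin θ)^2) = 2 * Real.cos θ := by
      have : 4 - (2 * Real.sin θ)^2 = (2 * Real.cos θ)^2 := by
        have := Real.sin_sq_add_cos_sq θ; nlinarith
      rw [this, Real.sqrt_sq (by positivity)]
    simp only [Function.comp, smul_eq_mul, hs]
    have hcs : Real.cos θ ^ 2 = 1 - Real.sin θ ^ 2 := Real.cos_sq' θ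
    rw [mul_pow]
    rw [show (4:ℝ) = 2^2 by norm_num, ← pow_mul]
    linear_combination (2^(2*n) * Real.sin θ^(2*n) * 4) * hcs
  rw [intervalIntegral.integral_congr hcong, intervalIntegral.integral_const_mul,
    intervalIntegral.integral_sub (by apply Continuous.intervalIntegrable; fun_prop)
      (by apply Continuous.intervalIntegrable; fun_prop)]
  rfl

lemma moment_even (n : ℕ) :
    (∫ y in (-2:ℝ)..2, y^(2*n) * Real.sqrt (4 - y^2)) = 2 * π * catalan n := by
  rw [moment_sub, T_rec, T_val]
  have h1 : (2*(n:ℝ)+2) ≠ 0 := by positivity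
  have h4 : ((4:ℝ)^n) ≠ 0 := by positivity
  field_simp
  ring

lemma moment_odd (n : ℕ) :
    (∫ y in (-2:ℝ)..2, y^(2*n+1) * Real.sqrt (4 - y^2)) = 0 := by
  set f : ℝ → ℝ := fun y => y^(2*n+1) * Real.sqrt (4 - y^2) with hf
  have h := intervalIntegral.integral_comp_neg (a := (-2:ℝ)) (b := 2) f
  simp only [neg_neg] at h
  have hodd : (fun y : ℝ => f (-y)) = fun y => -(f y) := by
    funext y
    simp only [hf]
    have h1 : (-y)^(2*n+1) = -(y^(2*n+1)) := Odd.neg_pow (odd_two_mul_add_one n) y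
    have h2 : (-y)^2 = y^2 := by ring
    rw [h1, h2]; ring
  rw [hodd, intervalIntegral.integral_neg] at h
  linarith [h]

theorem main (x : ℝ) :
    ∑' n : ℕ, (catalan n : ℝ) * x ^ (2 * n) / (2 * n).factorial
      = (1 / (2 * Real.pi)) * ∫ y in (-2:ℝ)..2,
          Real.exp (x * y) * Real.sqrt (4 - y ^ 2) := by
  set F : ℕ → ℝ → ℝ := fun k y => (x*y)^k / k.factorial * Real.sqrt (4 - y^2) with hF
  have hFc : ∀ k, Continuous (F k) := by intro k; simp only [hF]; fun_prop
  have hHS : HasSum (fun k => ∫ y in (-2:ℝ)..2, F k y)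
      (∫ y in (-2:ℝ)..2, Real.exp (x*y) * Real.sqrt (4 - y^2)) := by
    apply intervalIntegral.hasSum_integral_of_dominated_convergence
      (bound := fun k _ => (2*|x|)^k / k.factorial * 2)
    · intro k; exact (hFc k).aestronglyMeasurable
    · intro k
      filter_upwards with t ht
      have ht' : t ∈ Set.Ioc (-2:ℝ) 2 := by
        rwa [Set.uIoc_of_le (by norm_num : (-2:ℝ) ≤ 2)] at ht
      have habs : |t| ≤ 2 := abs_le.2 ⟨le_of_lt ht'.1, ht'.2⟩
      have hsq : Real.sqrt (4 - t^2) ≤ 2 := by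
        rw [show (2:ℝ) = Real.sqrt 4 by rw [show (4:ℝ) = 2^2 by norm_num, Real.sqrt_sq]; norm_num]
        apply Real.sqrt_le_sqrt; nlinarith
      have h0 : (0:ℝ) ≤ Real.sqrt (4 - t^2) := Real.sqrt_nonneg _
      simp only [hF, norm_mul, norm_div, Real.norm_eq_abs]
      rw [abs_of_nonneg h0]
      have h1 : |(x*t)^k| ≤ (2*|x|)^k := by
        rw [abs_pow]
        apply pow_le_pow_left₀ (abs_nonneg _)
        rw [abs_mul]
        calc |x| * |t| ≤ |x| * 2 := by nlinarith [abs_nonneg x]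
        _ = 2 * |x| := by ring
      have h2 : |(k.factorial : ℝ)| = (k.factorial : ℝ) := abs_of_pos (by positivity)
      rw [h2]
      apply mul_le_mul _ hsq h0 (by positivity)
      exact div_le_div_of_nonneg_right h1 (by positivity) |>.trans_eq rfl
    · filter_upwards with t _
      exact (Real.summable_pow_div_factorial (2*|x|)).mul_right 2
    · exact intervalIntegrable_const
    · filter_upwards with t _
      have h := NormedSpace.expSeries_div_hasSum_exp ((x*t : ℝ))
      rw [← Real.exp_eq_exp_ℝ] at h
      exact h.mul_right _
  have hval : ∀ k : ℕ, (∫ y in (-2:ℝ)..2, F k y)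
      = x^k / k.factorial * ∫ y in (-2:ℝ)..2, y^k * Real.sqrt (4 - y^2) := by
    intro k
    rw [← intervalIntegral.integral_const_mul]
    apply intervalIntegral.integral_congr
    intro y _
    simp only [hF, mul_pow]
    ring
  have heven : ∀ n : ℕ, (∫ y in (-2:ℝ)..2, F (2*n) y)
      = 2 * π * ((catalan n : ℝ) * x^(2*n) / (2*n).factorial) := by
    intro n
    rw [hval, moment_even]
    ring
  have hoddz : ∀ k, k ∉ Set.range (fun n : ℕ => 2*n) →
      (∫ y in (-2:ℝ)..2, F k y) = 0 := by
    intro k hk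
    have hodd : ∃ m, k = 2*m+1 := by
      rcases Nat.even_or_odd k with ⟨m, hm⟩ | ⟨m, hm⟩
      · exact absurd ⟨m, show 2*m = k by omega⟩ hk
      · exact ⟨m, by omega⟩
    obtain ⟨m, hm⟩ := hodd
    rw [hval, hm, moment_odd, mul_zero]
  have hinj : Function.Injective (fun n : ℕ => 2*n) := fun a b h => by
    simp only at h; omega
  have hsupp : Function.support (fun k => ∫ y in (-2:ℝ)..2, F k y)
      ⊆ Set.range (fun n : ℕ => 2*n) := by
    intro k hk
    by_contra h
    exact hk (hoddz k h)
  have htsum : ∑' n : ℕ, (∫ y in (-2:ℝ)..2, F (2*n) y)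
      = ∑' k, ∫ y in (-2:ℝ)..2, F k y := hinj.tsum_eq hsupp
  rw [← hHS.tsum_eq, ← htsum]
  have hpi : π ≠ 0 := Real.pi_ne_zero
  calc ∑' n : ℕ, (catalan n : ℝ) * x ^ (2 * n) / (2 * n).factorial
      = (1/(2*π)) * ∑' n : ℕ, 2 * π * ((catalan n : ℝ) * x^(2*n) / (2*n).factorial) := by
        rw [tsum_mul_left]
        field_simp
    _ = (1/(2*π)) * ∑' n : ℕ, (∫ y in (-2:ℝ)..2, F (2*n) y) := by
        congr 1
        exact tsum_congr fun n => (heven n).symm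

end CatalanEGF

/-- Exponential generating function identity:
`Σ_{n≥0} C_n x^{2n}/(2n)! = (1/(2π)) ∫_{−2}^{2} e^{xy} √(4−y²) dy` for all real `x`. -/
theorem catalan_egf_eq_semicircle_mgf (x : ℝ) :
    ∑' n : ℕ, (catalan n : ℝ) * x ^ (2 * n) / (2 * n).factorial
      = (1 / (2 * Real.pi)) * ∫ y in (-2:ℝ)..2,
          Real.exp (x * y) * Real.sqrt (4 - y ^ 2) := by
  exact CatalanEGF.main x
end

section
/- If κ(u) = c e^{−δu} with c, δ > 0, then for all λ strictly greater than the abscissa of convergence λ_c of Ĥ, the Laplace transform satisfies Ĥ(λ) = 1/(λ − c Ĥ(λ+δ)). -/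
open MeasureTheory Set Filter Topology

/-- For the exponential kernel `κ(u) = c e^{−δu}`, the Laplace transform of the solution
of the Kraichnan equation satisfies `Ĥ(λ) = 1/(λ − c Ĥ(λ+δ))` for all `λ` strictly above
the abscissa of convergence. -/
theorem laplace_exponential_kernel (c δ : ℝ) (hc : 0 < c) (hδ : 0 < δ)
    (H : ℝ → ℝ) (hHc : Continuous H) (hHnn : ∀ u, 0 ≤ H u) (hH0 : H 0 = 1)
    (hode : ∀ x ≥ (0:ℝ),
      HasDerivAt H
        (∫ u in (0:ℝ)..x, H (x - u) * H u * (c * Real.exp (-δ * (x - u)))) x)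
    (l μ : ℝ) (hμl : μ < l)
    (hint : IntegrableOn (fun u => Real.exp (-μ * u) * H u) (Set.Ioi 0)) :
    (∫ u in Set.Ioi (0:ℝ), Real.exp (-l * u) * H u)
      = 1 / (l - c * ∫ u in Set.Ioi (0:ℝ), Real.exp (-(l + δ) * u) * H u) := by
  set K : ℝ → ℝ :=
    fun x => ∫ u in (0:ℝ)..x, H (x - u) * H u * (c * Real.exp (-δ * (x - u))) with hK
  -- integrability of e^{-m u} H u for m ≥ μ
  have hintlam : ∀ m : ℝ, μ ≤ m → IntegrableOn (fun u => Real.exp (-m * u) * H u) (Ioi 0) := by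
    intro m hm
    apply hint.mono'
      ((by fun_prop : Continuous fun u : ℝ => Real.exp (-m * u) * H u).aestronglyMeasurable)
    filter_upwards [ae_restrict_mem measurableSet_Ioi] with u hu
    have hu0 : (0:ℝ) ≤ u := (mem_Ioi.1 hu).le
    have h1 : Real.exp (-m * u) ≤ Real.exp (-μ * u) := by
      apply Real.exp_le_exp.2; nlinarith
    rw [Real.norm_eq_abs, abs_of_nonneg (mul_nonneg (Real.exp_pos _).le (hHnn u))]
    exact mul_le_mul_of_nonneg_right h1 (hHnn u)
  have hfi : IntegrableOn (fun u => Real.exp (-l * u) * H u) (Ioi 0) := hintlam l hμl.le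
  have hgi0 : IntegrableOn (fun u => Real.exp (-(l + δ) * u) * H u) (Ioi 0) :=
    hintlam (l + δ) (by linarith)
  have hgi : IntegrableOn (fun u => c * (Real.exp (-(l + δ) * u) * H u)) (Ioi 0) :=
    hgi0.const_mul c
  -- K is nonnegative on [0, ∞)
  have hKnn : ∀ x ≥ (0:ℝ), 0 ≤ K x := by
    intro x hx
    apply intervalIntegral.integral_nonneg hx
    intro u _
    exact mul_nonneg (mul_nonneg (hHnn _) (hHnn _)) (by positivity)
  -- H is monotone on [0, ∞)
  have hmono : MonotoneOn H (Ici (0:ℝ)) := by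
    apply monotoneOn_of_deriv_nonneg (convex_Ici 0) hHc.continuousOn
    · intro x hx
      rw [interior_Ici] at hx
      exact ((hode x hx.le).differentiableAt).differentiableWithinAt
    · intro x hx
      rw [interior_Ici] at hx
      rw [(hode x hx.le).deriv]
      exact hKnn x hx.le
  -- bound e^{-μ x} H x by a constant
  set C := ∫ u in Ioi (0:ℝ), Real.exp (-μ * u) * H u with hC
  have hbound : ∀ x ≥ (0:ℝ), Real.exp (-μ * x) * H x ≤ Real.exp |μ| * C := by
    intro x hx
    have hsub : Ioc x (x + 1) ⊆ Ioi (0:ℝ) := fun u hu => lt_of_le_of_lt hx hu.1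
    have hJle : (∫ u in Ioc x (x + 1), Real.exp (-μ * u) * H u) ≤ C := by
      apply setIntegral_mono_set hint
      · exact Eventually.of_forall fun u => mul_nonneg (Real.exp_pos _).le (hHnn u)
      · exact HasSubset.Subset.eventuallyLE hsub
    have hconst : Real.exp (-μ * x - |μ|) * H x
        ≤ ∫ u in Ioc x (x + 1), Real.exp (-μ * u) * H u := by
      have hvol : (∫ _u in Ioc x (x + 1), Real.exp (-μ * x - |μ|) * H x)
          = Real.exp (-μ * x - |μ|) * H x := by
        simp [Real.volume_Ioc]
      rw [← hvol]
      apply setIntegral_mono_on (integrableOn_const measure_Ioc_lt_top.ne)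
        (hint.mono_set hsub) measurableSet_Ioc
      intro u hu
      have h1 : H x ≤ H u := hmono hx (hx.trans hu.1.le) hu.1.le
      have h2 : Real.exp (-μ * x - |μ|) ≤ Real.exp (-μ * u) := by
        apply Real.exp_le_exp.2
        have habs : |μ * (u - x)| ≤ |μ| := by
          rw [abs_mul]
          have : |u - x| ≤ 1 := by
            rw [abs_of_nonneg (by linarith [hu.1.le] : (0:ℝ) ≤ u - x)]
            linarith [hu.2]
          calc |μ| * |u - x| ≤ |μ| * 1 := by
                exact mul_le_mul_of_nonneg_left this (abs_nonneg μ)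
            _ = |μ| := mul_one _
        nlinarith [le_abs_self (μ * (u - x)), habs]
      exact mul_le_mul h2 h1 (hHnn x) (Real.exp_pos _).le
    have key := hconst.trans hJle
    have hrw : Real.exp (-μ * x) * H x
        = Real.exp |μ| * (Real.exp (-μ * x - |μ|) * H x) := by
      rw [← mul_assoc, ← Real.exp_add]; ring_nf
    rw [hrw]
    exact mul_le_mul_of_nonneg_left key (Real.exp_pos _).le
  -- e^{-l x} H x → 0 at infinity
  have htend : Tendsto (fun x => Real.exp (-l * x) * H x) atTop (𝓝 0) := by
    have h0 : Tendsto (fun x : ℝ => Real.exp (-((l - μ) * x)) * (Real.exp |μ| * C))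
        atTop (𝓝 0) := by
      have h1 : Tendsto (fun x : ℝ => Real.exp (-((l - μ) * x))) atTop (𝓝 0) :=
        Real.tendsto_exp_neg_atTop_nhds_zero.comp
          (Tendsto.const_mul_atTop (by linarith) tendsto_id)
      simpa using h1.mul_const (Real.exp |μ| * C)
    apply squeeze_zero' ?_ ?_ h0
    · filter_upwards [eventually_ge_atTop (0:ℝ)] with x _
      exact mul_nonneg (Real.exp_pos _).le (hHnn x)
    · filter_upwards [eventually_ge_atTop (0:ℝ)] with x hx
      have hrw : Real.exp (-l * x) * H x
          = Real.exp (-((l - μ) * x)) * (Real.exp (-μ * x) * H x) := by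
        rw [← mul_assoc, ← Real.exp_add]; ring_nf
      rw [hrw, ← mul_assoc, mul_assoc]
      exact mul_le_mul_of_nonneg_left (hbound x hx) (Real.exp_pos _).le
  -- the convolution identity
  have hkey : ∀ x : ℝ,
      (∫ t in (0:ℝ)..x, (Real.exp (-l * t) * H t)
        * (c * (Real.exp (-(l + δ) * (x - t)) * H (x - t))))
      = Real.exp (-l * x) * K x := by
    intro x
    rw [hK, ← intervalIntegral.integral_const_mul]
    apply intervalIntegral.integral_congr
    intro t _
    simp only
    have e1 : Real.exp (-l * t) * Real.exp (-(l + δ) * (x - t))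
        = Real.exp (-l * x) * Real.exp (-δ * (x - t)) := by
      rw [← Real.exp_add, ← Real.exp_add]; congr 1; ring
    linear_combination (c * H t * H (x - t)) * e1
  have hconv : (∫ x in Ioi (0:ℝ), Real.exp (-l * x) * K x)
      = (∫ u in Ioi (0:ℝ), Real.exp (-l * u) * H u)
        * (c * ∫ u in Ioi (0:ℝ), Real.exp (-(l + δ) * u) * H u) := by
    have h1 := integral_posConvolution hfi hgi (ContinuousLinearMap.mul ℝ ℝ)
    simp only [ContinuousLinearMap.mul_apply'] at h1
    rw [← integral_const_mul, ← h1]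
    apply setIntegral_congr_fun measurableSet_Ioi
    intro x _
    exact (hkey x).symm
  -- integrability of e^{-l x} K x
  have hψint : IntegrableOn (fun x => Real.exp (-l * x) * K x) (Ioi 0) := by
    have h1 := integrable_posConvolution hfi hgi (ContinuousLinearMap.mul ℝ ℝ)
    rw [posConvolution] at h1
    rw [integrable_indicator_iff measurableSet_Ioi] at h1
    simp only [ContinuousLinearMap.mul_apply'] at h1
    exact h1.congr_fun (fun x _ => hkey x) measurableSet_Ioi
  -- integration by parts (improper)
  have hφderiv : ∀ x ∈ Ioi (0:ℝ), HasDerivAt (fun y => Real.exp (-l * y) * H y)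
      (Real.exp (-l * x) * K x + (-l) * (Real.exp (-l * x) * H x)) x := by
    intro x hx
    have h1 : HasDerivAt (fun y : ℝ => Real.exp (-l * y)) (Real.exp (-l * x) * (-l * 1)) x :=
      ((hasDerivAt_id x).const_mul (-l)).exp
    have h2 := h1.mul (hode x (le_of_lt hx))
    refine h2.congr_deriv ?_
    rw [hK]; ring
  have hφ'int : IntegrableOn
      (fun x => Real.exp (-l * x) * K x + (-l) * (Real.exp (-l * x) * H x)) (Ioi 0) :=
    hψint.add (hfi.const_mul (-l))
  have hcont : ContinuousWithinAt (fun y => Real.exp (-l * y) * H y) (Ici (0:ℝ)) 0 :=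
    ((Real.continuous_exp.comp (continuous_const.mul continuous_id)).mul hHc).continuousWithinAt
  have hibp := integral_Ioi_of_hasDerivAt_of_tendsto hcont hφderiv hφ'int htend
  rw [integral_add hψint (hfi.const_mul (-l)), integral_const_mul, hconv] at hibp
  simp only [mul_zero, neg_zero, Real.exp_zero, hH0, mul_one, zero_sub] at hibp
  -- conclude
  have hmul : (∫ u in Ioi (0:ℝ), Real.exp (-l * u) * H u)
      * (l - c * ∫ u in Ioi (0:ℝ), Real.exp (-(l + δ) * u) * H u) = 1 := by
    linear_combination -hibp
  have hne : (l - c * ∫ u in Ioi (0:ℝ), Real.exp (-(l + δ) * u) * H u) ≠ 0 := by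
    intro h
    rw [h, mul_zero] at hmul
    norm_num at hmul
  rw [eq_div_iff hne]
  exact hmul
end

section
/- If k(u) = c₂ + c₁ e^{−δu} with c₁, c₂, δ > 0, then for λ greater than the abscissa of convergence λ_c of Ĥ, Ĥ(λ) = (1/(2c₂))[λ − c₁ Ĥ(λ+δ) − √((λ − c₁ Ĥ(λ+δ))² − 4c₂)], and in particular (λ − c₁ Ĥ(λ+δ))² ≥ 4c₂ for all λ > λ_c. -/
open MeasureTheory

section KraichnanAuxSection
open Set Filter Topology
namespace KraichnanAux

/-- The Laplace transform of `H`. -/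
noncomputable def Lap (H : ℝ → ℝ) (p : ℝ) : ℝ :=
  ∫ u in Set.Ioi (0:ℝ), Real.exp (-p * u) * H u

lemma integral_exp_Ioi {ν : ℝ} (hν : 0 < ν) :
    ∫ x in Set.Ioi (0:ℝ), Real.exp (-ν * x) = 1 / ν := by
  have h := integral_comp_mul_left_Ioi (fun y => Real.exp (-y)) 0 hν
  simp only [mul_zero, integral_exp_neg_Ioi_zero, smul_eq_mul, mul_one] at h
  rw [show (fun x => Real.exp (-ν * x)) = fun x => Real.exp (-(ν * x)) by ext x; ring_nf]
  rw [h, one_div]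

lemma expIntOn {ν : ℝ} (hν : 0 < ν) :
    IntegrableOn (fun x => Real.exp (-ν * x)) (Set.Ioi (0:ℝ)) :=
  exp_neg_integrableOn_Ioi 0 hν

/-- Upgrade integrability from abscissa `μ` to any `ν ≥ μ`. -/
lemma lapIntOn {H : ℝ → ℝ} (hHc : Continuous H) (hHnn : ∀ u, 0 ≤ H u) {μ ν : ℝ}
    (hint : IntegrableOn (fun u => Real.exp (-μ * u) * H u) (Set.Ioi 0)) (hν : μ ≤ ν) :
    IntegrableOn (fun u => Real.exp (-ν * u) * H u) (Set.Ioi 0) := by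
  apply Integrable.mono' hint
    ((Continuous.aestronglyMeasurable (by fun_prop) :
      AEStronglyMeasurable (fun u => Real.exp (-ν * u) * H u) _))
  filter_upwards [ae_restrict_mem measurableSet_Ioi] with u hu
  have hu0 : (0:ℝ) < u := hu
  rw [Real.norm_eq_abs, abs_of_nonneg (mul_nonneg (Real.exp_pos _).le (hHnn u))]
  exact mul_le_mul_of_nonneg_right (Real.exp_le_exp.mpr (by nlinarith)) (hHnn u)


section WithODE

variable {c₁ c₂ δ : ℝ} {H : ℝ → ℝ}

/-- The convolution kernel integrand. -/
noncomputable def Gfun (c₁ c₂ δ : ℝ) (H : ℝ → ℝ) (x : ℝ) : ℝ :=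
  ∫ u in (0:ℝ)..x, H (x - u) * H u * (c₂ + c₁ * Real.exp (-δ * (x - u)))

lemma Gcont (hHc : Continuous H) : Continuous (Gfun c₁ c₂ δ H) := by
  have : Continuous (Function.uncurry fun (x : ℝ) (u : ℝ) =>
      H (x - u) * H u * (c₂ + c₁ * Real.exp (-δ * (x - u)))) := by
    apply Continuous.mul
    · exact ((hHc.comp (continuous_fst.sub continuous_snd)).mul (hHc.comp continuous_snd))
    · fun_prop
  exact intervalIntegral.continuous_parametric_intervalIntegral_of_continuous this continuous_id

lemma Gnonneg (hHnn : ∀ u, 0 ≤ H u) (hc₁ : 0 < c₁) (hc₂ : 0 < c₂) {x : ℝ} (hx : 0 ≤ x) :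
    0 ≤ Gfun c₁ c₂ δ H x := by
  apply intervalIntegral.integral_nonneg hx
  intro u _
  have := hHnn (x - u); have := hHnn u; positivity

variable (hHc : Continuous H) (hHnn : ∀ u, 0 ≤ H u) (hH0 : H 0 = 1)
    (hc₁ : 0 < c₁) (hc₂ : 0 < c₂)
    (hode : ∀ x ≥ (0:ℝ), HasDerivAt H (Gfun c₁ c₂ δ H x) x)

include hHc hHnn hc₁ hc₂ hode

lemma Hmono : MonotoneOn H (Set.Ici 0) := by
  apply monotoneOn_of_deriv_nonneg (convex_Ici 0) hHc.continuousOn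
  · intro x hx
    rw [interior_Ici] at hx
    exact (hode x (le_of_lt hx)).differentiableAt.differentiableWithinAt
  · intro x hx
    rw [interior_Ici] at hx
    rw [(hode x (le_of_lt hx)).deriv]
    exact Gnonneg hHnn hc₁ hc₂ (le_of_lt hx)

include hH0

lemma Hge1 {u : ℝ} (hu : 0 ≤ u) : 1 ≤ H u := by
  have := Hmono hHc hHnn hc₁ hc₂ hode (self_mem_Ici (a := (0:ℝ))) hu hu
  rwa [hH0] at this

omit hHnn hc₁ hc₂ in
lemma ftcG {x : ℝ} (hx : 0 ≤ x) :
    ∫ t in (0:ℝ)..x, Gfun c₁ c₂ δ H t = H x - 1 := by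
  rw [intervalIntegral.integral_eq_sub_of_hasDerivAt
    (f := H) (fun t ht => hode t (by rw [Set.uIcc_of_le hx] at ht; exact ht.1))
    ((Gcont hHc).intervalIntegrable 0 x), hH0]


include hH0

lemma mu_pos {μ : ℝ}
    (hint : IntegrableOn (fun u => Real.exp (-μ * u) * H u) (Set.Ioi 0)) : 0 < μ := by
  have h1 : IntegrableOn (fun u => Real.exp (-μ * u)) (Set.Ioi 0) := by
    apply Integrable.mono' hint (Continuous.aestronglyMeasurable (by fun_prop))
    filter_upwards [ae_restrict_mem measurableSet_Ioi] with u hu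
    rw [Real.norm_eq_abs, abs_of_nonneg (Real.exp_pos _).le]
    nlinarith [Real.exp_pos (-μ * u), Hge1 hHc hHnn hH0 hc₁ hc₂ hode (le_of_lt (by exact hu))]
  by_contra hμ
  push_neg at hμ
  have hone : IntegrableOn (fun _ : ℝ => (1:ℝ)) (Set.Ioi 0) := by
    apply Integrable.mono' h1 aestronglyMeasurable_const
    filter_upwards [ae_restrict_mem measurableSet_Ioi] with u hu
    have hu0 : (0:ℝ) < u := hu
    rw [norm_one, show (1:ℝ) = Real.exp 0 by simp]
    exact Real.exp_le_exp.mpr (by nlinarith)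
  have := integrable_const_iff.mp hone
  simp [isFiniteMeasure_restrict, Real.volume_Ioi] at this

lemma quad (hδ : 0 < δ) {μ ν : ℝ}
    (hint : IntegrableOn (fun u => Real.exp (-μ * u) * H u) (Set.Ioi 0)) (hν : μ ≤ ν) :
    ν * Lap H ν = 1 + Lap H ν * (c₂ * Lap H ν + c₁ * Lap H (ν + δ)) := by
  have hν0 : 0 < ν := lt_of_lt_of_le (mu_pos hHc hHnn hH0 hc₁ hc₂ hode hint) hν
  have fint : IntegrableOn (fun u => Real.exp (-ν * u) * H u) (Set.Ioi 0) :=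
    lapIntOn hHc hHnn hint hν
  have fintδ : IntegrableOn (fun u => Real.exp (-(ν + δ) * u) * H u) (Set.Ioi 0) :=
    lapIntOn hHc hHnn hint (by linarith)
  have hsplit : (fun v => Real.exp (-ν * v) * H v * (c₂ + c₁ * Real.exp (-δ * v)))
      = fun v => c₂ * (Real.exp (-ν * v) * H v) + c₁ * (Real.exp (-(ν + δ) * v) * H v) := by
    ext v
    rw [show -(ν + δ) * v = -ν * v + -δ * v by ring, Real.exp_add]
    ring
  have gint : IntegrableOn
      (fun v => Real.exp (-ν * v) * H v * (c₂ + c₁ * Real.exp (-δ * v))) (Set.Ioi 0) := by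
    rw [hsplit]; exact (fint.const_mul c₂).add (fintδ.const_mul c₁)
  have gval : ∫ v in Set.Ioi (0:ℝ), Real.exp (-ν * v) * H v * (c₂ + c₁ * Real.exp (-δ * v))
      = c₂ * Lap H ν + c₁ * Lap H (ν + δ) := by
    rw [hsplit, integral_add (fint.const_mul c₂) (fintδ.const_mul c₁),
      integral_const_mul, integral_const_mul, Lap, Lap]
  have hrw : ∀ x : ℝ, (∫ t in (0:ℝ)..x, (Real.exp (-ν * t) * H t) *
        (Real.exp (-ν * (x - t)) * H (x - t) * (c₂ + c₁ * Real.exp (-δ * (x - t)))))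
      = Real.exp (-ν * x) * Gfun c₁ c₂ δ H x := by
    intro x
    rw [Gfun, ← intervalIntegral.integral_const_mul]
    apply intervalIntegral.integral_congr
    intro t _
    have hexp : Real.exp (-ν * t) * Real.exp (-ν * (x - t)) = Real.exp (-ν * x) := by
      rw [← Real.exp_add]; ring_nf
    rw [← hexp]; ring
  have Gint : IntegrableOn (fun x => Real.exp (-ν * x) * Gfun c₁ c₂ δ H x) (Set.Ioi 0) := by
    have h := integrable_posConvolution fint gint (ContinuousLinearMap.mul ℝ ℝ)
    apply (h.integrableOn).congr_fun ?_ measurableSet_Ioi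
    intro x hx
    rw [posConvolution, Set.indicator_of_mem hx]
    simp only [ContinuousLinearMap.mul_apply']
    exact hrw x
  have step3 : ∫ x in Set.Ioi (0:ℝ), Real.exp (-ν * x) * Gfun c₁ c₂ δ H x
      = Lap H ν * (c₂ * Lap H ν + c₁ * Lap H (ν + δ)) := by
    have h := integral_posConvolution fint gint (ContinuousLinearMap.mul ℝ ℝ)
    simp only [ContinuousLinearMap.mul_apply'] at h
    rw [← gval, Lap, ← h]
    apply setIntegral_congr_fun measurableSet_Ioi
    intro x _
    exact (hrw x).symm
  have step2 : ∫ x in Set.Ioi (0:ℝ), Real.exp (-ν * x) * (H x - 1)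
      = (Lap H ν * (c₂ * Lap H ν + c₁ * Lap H (ν + δ))) * (1 / ν) := by
    have h := integral_posConvolution Gint (expIntOn hν0) (ContinuousLinearMap.mul ℝ ℝ)
    simp only [ContinuousLinearMap.mul_apply'] at h
    rw [← step3, ← integral_exp_Ioi hν0, ← h]
    apply setIntegral_congr_fun measurableSet_Ioi
    intro x hx
    show Real.exp (-ν * x) * (H x - 1)
        = ∫ t in (0:ℝ)..x, Real.exp (-ν * t) * Gfun c₁ c₂ δ H t * Real.exp (-ν * (x - t))
    rw [← ftcG hHc hH0 hode (le_of_lt (show (0:ℝ) < x from hx)),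
      ← intervalIntegral.integral_const_mul]
    apply intervalIntegral.integral_congr
    intro t _
    have hexp : Real.exp (-ν * t) * Real.exp (-ν * (x - t)) = Real.exp (-ν * x) := by
      rw [← Real.exp_add]; ring_nf
    rw [← hexp]; ring
  have lhs2 : ∫ x in Set.Ioi (0:ℝ), Real.exp (-ν * x) * (H x - 1) = Lap H ν - 1 / ν := by
    rw [show (fun x => Real.exp (-ν * x) * (H x - 1))
        = fun x => Real.exp (-ν * x) * H x - Real.exp (-ν * x) by ext x; ring]
    rw [integral_sub fint (expIntOn hν0), integral_exp_Ioi hν0, Lap]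
  rw [lhs2] at step2
  have hνne : ν ≠ 0 := ne_of_gt hν0
  field_simp at step2
  linarith


lemma lap_pos {ν : ℝ} (hν0 : 0 < ν)
    (hintν : IntegrableOn (fun u => Real.exp (-ν * u) * H u) (Set.Ioi 0)) :
    1 / ν ≤ Lap H ν := by
  rw [← integral_exp_Ioi hν0, Lap]
  apply setIntegral_mono_on (expIntOn hν0) hintν measurableSet_Ioi
  intro u hu
  nlinarith [Real.exp_pos (-ν * u),
    Hge1 hHc hHnn hH0 hc₁ hc₂ hode (le_of_lt (show (0:ℝ) < u from hu))]

omit hH0 hode hc₁ hc₂ in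
lemma lap_anti {μ ν₁ ν₂ : ℝ}
    (hint : IntegrableOn (fun u => Real.exp (-μ * u) * H u) (Set.Ioi 0))
    (h1 : μ ≤ ν₁) (h12 : ν₁ ≤ ν₂) : Lap H ν₂ ≤ Lap H ν₁ := by
  apply setIntegral_mono_on (lapIntOn hHc hHnn hint (h1.trans h12))
    (lapIntOn hHc hHnn hint h1) measurableSet_Ioi
  intro u hu
  have hu0 : (0:ℝ) < u := hu
  exact mul_le_mul_of_nonneg_right (Real.exp_le_exp.mpr (by nlinarith)) (hHnn u)

omit hH0 hode hc₁ hc₂ in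
lemma lap_contAt {μ ν : ℝ}
    (hint : IntegrableOn (fun u => Real.exp (-μ * u) * H u) (Set.Ioi 0))
    (hν : μ < ν) : ContinuousAt (Lap H) ν := by
  have hres : ContinuousAt (fun p => ∫ u in Set.Ioi (0:ℝ), Real.exp (-p * u) * H u) ν := by
    apply continuousAt_of_dominated (bound := fun u => Real.exp (-((μ + ν) / 2) * u) * H u)
    · filter_upwards with p
      exact Continuous.aestronglyMeasurable (by fun_prop)
    · filter_upwards [eventually_gt_nhds (show (μ + ν) / 2 < ν by linarith)] with p hp
      filter_upwards [ae_restrict_mem measurableSet_Ioi] with u hu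
      have hu0 : (0:ℝ) < u := hu
      rw [Real.norm_eq_abs, abs_of_nonneg (mul_nonneg (Real.exp_pos _).le (hHnn u))]
      exact mul_le_mul_of_nonneg_right (Real.exp_le_exp.mpr (by nlinarith)) (hHnn u)
    · exact lapIntOn hHc hHnn hint (by linarith)
    · filter_upwards with u
      exact ((Real.continuous_exp.comp ((continuous_id.neg).mul continuous_const)).mul
        continuous_const).continuousAt
  exact hres

omit hH0 hode hc₁ hc₂ in
lemma lap_tendsto {μ : ℝ}
    (hint : IntegrableOn (fun u => Real.exp (-μ * u) * H u) (Set.Ioi 0)) :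
    Tendsto (Lap H) atTop (𝓝 0) := by
  have h0 : (0:ℝ) = ∫ _u in Set.Ioi (0:ℝ), (0:ℝ) := by simp
  have hres : Tendsto (fun p => ∫ u in Set.Ioi (0:ℝ), Real.exp (-p * u) * H u) atTop
      (𝓝 (∫ _u in Set.Ioi (0:ℝ), (0:ℝ))) := by
    apply tendsto_integral_filter_of_dominated_convergence
      (bound := fun u => Real.exp (-(μ + 1) * u) * H u)
    · filter_upwards with p
      exact Continuous.aestronglyMeasurable (by fun_prop)
    · filter_upwards [eventually_ge_atTop (μ + 1)] with p hp
      filter_upwards [ae_restrict_mem measurableSet_Ioi] with u hu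
      have hu0 : (0:ℝ) < u := hu
      rw [Real.norm_eq_abs, abs_of_nonneg (mul_nonneg (Real.exp_pos _).le (hHnn u))]
      exact mul_le_mul_of_nonneg_right (Real.exp_le_exp.mpr (by nlinarith)) (hHnn u)
    · exact lapIntOn hHc hHnn hint (by linarith)
    · filter_upwards [ae_restrict_mem measurableSet_Ioi] with u hu
      have hu0 : (0:ℝ) < u := hu
      have hlin : Tendsto (fun p : ℝ => -p * u) atTop atBot := by
        have := tendsto_id (α := ℝ) (x := atTop)
        have h2 : Tendsto (fun p : ℝ => p * u) atTop atTop :=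
          Tendsto.atTop_mul_const hu0 this
        have h3 : Tendsto (fun p : ℝ => -(p * u)) atTop atBot :=
          tendsto_neg_atTop_atBot.comp h2
        simpa [neg_mul] using h3
      have hexp := Real.tendsto_exp_atBot.comp hlin
      simpa using hexp.mul_const (H u)
  rw [h0]
  exact hres

lemma main (hδpos : 0 < δ) {μ l : ℝ} (hμl : μ < l)
    (hint : IntegrableOn (fun u => Real.exp (-μ * u) * H u) (Set.Ioi 0)) :
    (l - c₁ * Lap H (l + δ)) ^ 2 ≥ 4 * c₂ ∧
      Lap H l = (1 / (2 * c₂)) * ((l - c₁ * Lap H (l + δ)) -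
        Real.sqrt ((l - c₁ * Lap H (l + δ)) ^ 2 - 4 * c₂)) := by
  have hμ0 : 0 < μ := mu_pos hHc hHnn hH0 hc₁ hc₂ hode hint
  have hl0 : 0 < l := hμ0.trans hμl
  set A := Lap H l with hA
  set Ad := Lap H (l + δ) with hAd
  have hApos : 0 < A :=
    lt_of_lt_of_le (by positivity)
      (lap_pos hHc hHnn hH0 hc₁ hc₂ hode hl0 (lapIntOn hHc hHnn hint hμl.le))
  have hquadl : l * A = 1 + A * (c₂ * A + c₁ * Ad) :=
    quad hHc hHnn hH0 hc₁ hc₂ hode hδpos hint hμl.le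
  have hBl : (l - c₁ * Ad) * A = 1 + c₂ * A ^ 2 := by linear_combination hquadl
  have hkey : c₂ * A ^ 2 ≤ 1 := by
    by_contra hgt
    push_neg at hgt
    set a₀ : ℝ := 1 / Real.sqrt c₂ with ha₀
    have hsq : 0 < Real.sqrt c₂ := Real.sqrt_pos.mpr hc₂
    have hsqsq : Real.sqrt c₂ ^ 2 = c₂ := Real.sq_sqrt hc₂.le
    have ha₀pos : 0 < a₀ := by positivity
    have ha₀sq : c₂ * a₀ ^ 2 = 1 := by
      rw [ha₀, div_pow, one_pow, hsqsq]
      field_simp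
    have hAa₀ : a₀ < A := by
      by_contra hcon
      push_neg at hcon
      have hA2 : A ^ 2 ≤ a₀ ^ 2 := by nlinarith
      nlinarith [mul_le_mul_of_nonneg_left hA2 hc₂.le]
    have hev : ∀ᶠ p in atTop, Lap H p < a₀ :=
      (lap_tendsto hHc hHnn hint).eventually_lt_const ha₀pos
    obtain ⟨M, hM1, hM2⟩ : ∃ M, l ≤ M ∧ Lap H M < a₀ := by
      rcases (hev.and (eventually_ge_atTop l)).exists with ⟨M, h1, h2⟩
      exact ⟨M, h2, h1⟩
    have hcont : ContinuousOn (Lap H) (Set.Icc l M) := fun x hx =>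
      (lap_contAt hHc hHnn hint (lt_of_lt_of_le hμl hx.1)).continuousWithinAt
    obtain ⟨ls, hls, hlseq⟩ := intermediate_value_Icc' hM1 hcont ⟨hM2.le, hAa₀.le⟩
    have hlls : l < ls := by
      rcases lt_or_eq_of_le hls.1 with h | h
      · exact h
      · exfalso
        rw [← h] at hlseq
        rw [← hA] at hlseq
        linarith
    have hquads : ls * Lap H ls = 1 + Lap H ls * (c₂ * Lap H ls + c₁ * Lap H (ls + δ)) :=
      quad hHc hHnn hH0 hc₁ hc₂ hode hδpos hint (le_trans hμl.le hls.1)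
    rw [hlseq] at hquads
    set Ls := Lap H (ls + δ) with hLs
    have hanti : Ls ≤ Ad :=
      lap_anti hHc hHnn hint (by linarith) (by linarith)
    have hBs : (ls - c₁ * Ls) * a₀ = 2 := by linear_combination hquads + ha₀sq
    have hlt : (l - c₁ * Ad) < (ls - c₁ * Ls) := by
      have := mul_le_mul_of_nonneg_left hanti hc₁.le
      linarith
    have h4 : (1 + c₂ * A ^ 2) < (ls - c₁ * Ls) * A := by
      rw [← hBl]
      exact mul_lt_mul_of_pos_right hlt hApos
    have h6 := mul_lt_mul_of_pos_right h4 ha₀pos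
    have h7 : (ls - c₁ * Ls) * A * a₀ = 2 * A := by
      rw [show (ls - c₁ * Ls) * A * a₀ = (ls - c₁ * Ls) * a₀ * A by ring, hBs]
    rw [h7] at h6
    nlinarith [sq_nonneg (A - a₀), ha₀pos, hApos]
  constructor
  · nlinarith [hBl, sq_nonneg (1 - c₂ * A ^ 2), mul_pos hApos hApos, sq_nonneg (l - c₁ * Ad)]
  · have hs : 0 ≤ (1 - c₂ * A ^ 2) / A := div_nonneg (by linarith) hApos.le
    have h1 : (l - c₁ * Ad) ^ 2 - 4 * c₂ = ((1 - c₂ * A ^ 2) / A) ^ 2 := by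
      rw [div_pow, eq_div_iff (pow_ne_zero 2 (ne_of_gt hApos))]
      linear_combination ((l - c₁ * Ad) * A + (1 + c₂ * A ^ 2)) * hBl
    rw [h1, Real.sqrt_sq hs]
    have h2 : l - c₁ * Ad - (1 - c₂ * A ^ 2) / A = 2 * c₂ * A := by
      field_simp
      linear_combination hBl
    rw [h2]
    field_simp

end WithODE
end KraichnanAux
end KraichnanAuxSection

/-- For the kernel `k(u) = c₂ + c₁ e^{−δu}`, the Laplace transform of the solution of the
Kraichnan equation satisfies, for `λ` strictly above the abscissa of convergence,
`Ĥ(λ) = (1/(2c₂))[λ − c₁Ĥ(λ+δ) − √((λ − c₁Ĥ(λ+δ))² − 4c₂)]`, and in particular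
`(λ − c₁Ĥ(λ+δ))² ≥ 4c₂`. -/
theorem laplace_mixed_kernel (c₁ c₂ δ : ℝ) (hc₁ : 0 < c₁) (hc₂ : 0 < c₂) (hδ : 0 < δ)
    (H : ℝ → ℝ) (hHc : Continuous H) (hHnn : ∀ u, 0 ≤ H u) (hH0 : H 0 = 1)
    (hode : ∀ x ≥ (0:ℝ),
      HasDerivAt H
        (∫ u in (0:ℝ)..x,
          H (x - u) * H u * (c₂ + c₁ * Real.exp (-δ * (x - u)))) x)
    (l μ : ℝ) (hμl : μ < l)
    (hint : IntegrableOn (fun u => Real.exp (-μ * u) * H u) (Set.Ioi 0)) :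
    (l - c₁ * ∫ u in Set.Ioi (0:ℝ), Real.exp (-(l + δ) * u) * H u) ^ 2 ≥ 4 * c₂ ∧
    (∫ u in Set.Ioi (0:ℝ), Real.exp (-l * u) * H u)
      = (1 / (2 * c₂)) *
        ((l - c₁ * ∫ u in Set.Ioi (0:ℝ), Real.exp (-(l + δ) * u) * H u) -
          Real.sqrt
            ((l - c₁ * ∫ u in Set.Ioi (0:ℝ), Real.exp (-(l + δ) * u) * H u) ^ 2
              - 4 * c₂)) := by
  have hode' : ∀ x ≥ (0:ℝ), HasDerivAt H (KraichnanAux.Gfun c₁ c₂ δ H x) x := hode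
  have h := KraichnanAux.main hHc hHnn hH0 hc₁ hc₂ hode' hδ hμl hint
  simpa [KraichnanAux.Lap] using h
end

section
/- Uniqueness of zeros on the critical line: if G : ℝ≥0 → ℝ≥0 is measurable, not almost everywhere zero, with ∫_0^∞ e^{−λ_c u} G(u) du < ∞, and z ∈ ℂ with Re(z) = λ_c satisfies ∫_0^∞ e^{−zu}G(u)du − z = ∫_0^∞ e^{−λ_c u}G(u)du − λ_c, then Im(z) = 0. -/
open MeasureTheory

/-- Uniqueness of zeros on the critical line: if `G ≥ 0` is measurable, not a.e. zero on
`(0,∞)`, with `∫_0^∞ e^{−λ_c u} G(u) du < ∞`, and `z` with `Re z = λ_c` satisfies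
`∫_0^∞ e^{−zu} G(u) du − z = ∫_0^∞ e^{−λ_c u} G(u) du − λ_c`, then `Im z = 0`. -/
theorem critical_line_zero_unique (G : ℝ → ℝ) (hGm : Measurable G)
    (hGnn : ∀ u, 0 ≤ G u)
    (hne : ¬ (∀ᵐ u ∂(volume.restrict (Set.Ioi (0:ℝ))), G u = 0))
    (lc : ℝ)
    (hint : IntegrableOn (fun u => Real.exp (-lc * u) * G u) (Set.Ioi 0))
    (z : ℂ) (hz : z.re = lc)
    (heq : (∫ u in Set.Ioi (0:ℝ), Complex.exp (-z * u) * (G u : ℂ)) - z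
      = ((∫ u in Set.Ioi (0:ℝ), Real.exp (-lc * u) * G u : ℝ) : ℂ) - (lc : ℂ)) :
    z.im = 0 := by
  by_contra hb
  set b := z.im with hbdef
  -- integrability of the complex integrand
  have hmeas : AEStronglyMeasurable (fun u : ℝ => Complex.exp (-z * u) * (G u : ℂ))
      (volume.restrict (Set.Ioi (0:ℝ))) := by
    apply Measurable.aestronglyMeasurable
    exact ((Complex.measurable_exp.comp ((measurable_const.mul Complex.measurable_ofReal)))).mul
      (Complex.measurable_ofReal.comp hGm)
  have hnorm : ∀ u : ℝ, ‖Complex.exp (-z * u) * (G u : ℂ)‖ = Real.exp (-lc * u) * |G u| := by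
    intro u
    rw [norm_mul, Complex.norm_exp, Complex.norm_real]
    congr 2
    simp [hz]
  have hintC : IntegrableOn (fun u : ℝ => Complex.exp (-z * u) * (G u : ℂ)) (Set.Ioi 0) := by
    refine Integrable.mono' hint hmeas ?_
    filter_upwards with u
    rw [hnorm u, abs_of_nonneg (hGnn u)]
  -- real part of the equation
  have hre : (∫ u in Set.Ioi (0:ℝ), Complex.exp (-z * u) * (G u : ℂ)).re
      = ∫ u in Set.Ioi (0:ℝ), Real.exp (-lc * u) * Real.cos (b * u) * G u := by
    rw [← RCLike.re_to_complex, ← integral_re hintC]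
    congr 1
    funext u
    rw [RCLike.re_to_complex]
    have : (Complex.exp (-z * u)).re = Real.exp (-lc * u) * Real.cos (b * u) := by
      rw [Complex.exp_re]
      congr 1
      · congr 1; simp [hz]
      · have h : (-z * (u:ℂ)).im = -(b * u) := by simp [hbdef]
        rw [h, Real.cos_neg]
    rw [Complex.mul_re, Complex.ofReal_re, Complex.ofReal_im, mul_zero, sub_zero, this]
  -- from heq, real parts
  have heqre : ∫ u in Set.Ioi (0:ℝ), Real.exp (-lc * u) * Real.cos (b * u) * G u
      = ∫ u in Set.Ioi (0:ℝ), Real.exp (-lc * u) * G u := by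
    have := congrArg Complex.re heq
    simp only [Complex.sub_re, Complex.ofReal_re, hz] at this
    rw [hre] at this
    linarith
  -- the nonnegative function with zero integral
  set f : ℝ → ℝ := fun u => Real.exp (-lc * u) * G u - Real.exp (-lc * u) * Real.cos (b * u) * G u with hf
  have hfnn : ∀ u, 0 ≤ f u := by
    intro u
    have h1 : Real.cos (b * u) ≤ 1 := Real.cos_le_one _
    have key : f u = Real.exp (-lc * u) * G u * (1 - Real.cos (b * u)) := by
      simp only [hf]; ring
    rw [key]
    exact mul_nonneg (mul_nonneg (Real.exp_pos _).le (hGnn u)) (by linarith)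
  have hgint : IntegrableOn (fun u => Real.exp (-lc * u) * Real.cos (b * u) * G u)
      (Set.Ioi (0:ℝ)) := by
    refine Integrable.mono' hint ?_ ?_
    · exact (((Real.measurable_exp.comp (measurable_const.mul measurable_id)).mul
        (Real.measurable_cos.comp (measurable_const.mul measurable_id))).mul hGm).aestronglyMeasurable
    · filter_upwards with u
      rw [Real.norm_eq_abs, abs_mul, abs_mul, Real.abs_exp]
      have h1 : |Real.cos (b * u)| ≤ 1 := Real.abs_cos_le_one _
      have h2 : |G u| = G u := abs_of_nonneg (hGnn u)
      rw [h2]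
      have : Real.exp (-lc * u) * |Real.cos (b * u)| * G u
          ≤ Real.exp (-lc * u) * 1 * G u := by
        gcongr
        exact hGnn u
      linarith
  have hfint : IntegrableOn f (Set.Ioi (0:ℝ)) := hint.sub hgint
  have hfzero : ∫ u in Set.Ioi (0:ℝ), f u = 0 := by
    rw [hf, integral_sub hint hgint, heqre, sub_self]
  have hae : ∀ᵐ u ∂(volume.restrict (Set.Ioi (0:ℝ))), f u = 0 := by
    have := (integral_eq_zero_iff_of_nonneg (fun u => hfnn u) hfint).mp hfzero
    filter_upwards [this] with u hu using hu
  -- the set where cos (b u) = 1 is null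
  have hNnull : volume {u : ℝ | Real.cos (b * u) = 1} = 0 := by
    have hsub : {u : ℝ | Real.cos (b * u) = 1} ⊆ Set.range (fun n : ℤ => (n : ℝ) * (2 * Real.pi) / b) := by
      intro u hu
      obtain ⟨n, hn⟩ := (Real.cos_eq_one_iff _).mp hu
      exact ⟨n, by field_simp [hn]; linear_combination hn⟩
    exact measure_mono_null hsub ((Set.countable_range _).measure_zero _)
  have hNae : ∀ᵐ u ∂(volume.restrict (Set.Ioi (0:ℝ))), Real.cos (b * u) ≠ 1 := by
    rw [ae_restrict_iff' measurableSet_Ioi]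
    have : ∀ᵐ u : ℝ, Real.cos (b * u) ≠ 1 := by
      rw [ae_iff]
      simpa using hNnull
    filter_upwards [this] with u hu _ using hu
  apply hne
  filter_upwards [hae, hNae] with u hu hcu
  simp only [hf] at hu
  have hfactor : Real.exp (-lc * u) * G u * (1 - Real.cos (b * u)) = 0 := by linarith [hu]
  have h1 : (1 : ℝ) - Real.cos (b * u) ≠ 0 := by
    intro h; exact hcu (by linarith)
  have h2 : Real.exp (-lc * u) ≠ 0 := (Real.exp_pos _).ne'
  rcases mul_eq_zero.mp hfactor with h | h
  · rcases mul_eq_zero.mp h with h' | h'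
    · exact absurd h' h2
    · exact h'
  · exact absurd h h1
end
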